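/- arXiv:2511.04197 — 15 statements merged into one kernel-verified Lean document; each statement's English description precedes it below -/
import Mathlib

section
/- Let n be a natural number, λ : Fin n → ℝ, and set Λ = diag(λᵢ), |Λ⁻| = diag(−min(λᵢ,0)), √|Λ⁻| = diag(√(−min(λᵢ,0))), and let I⁻ = diag(if λᵢ < 0 then 1 else 0). Let T be any real n×n matrix, let U, G ∈ ℝⁿ, and set W = Tᵀ U and W⁻ = I⁻ W. Then Wᵀ Λ W + Uᵀ (2 T I⁻ √|Λ⁻| (√|Λ⁻| W⁻ − G)) ≥ −Gᵀ G. -/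
open Matrix Real

/-- Theorem 1 of the paper (nonlinearly stable SAT inequality):
`Wᵀ Λ W + Uᵀ (2 T I⁻ √|Λ⁻| (√|Λ⁻| W⁻ − G)) ≥ −Gᵀ G`. -/
theorem sat_inequality (n : ℕ) (lam : Fin n → ℝ) (T : Matrix (Fin n) (Fin n) ℝ)
    (U G : Fin n → ℝ) :
    let Λ : Matrix (Fin n) (Fin n) ℝ := Matrix.diagonal lam
    let sqrtAbsΛm : Matrix (Fin n) (Fin n) ℝ :=
      Matrix.diagonal (fun i => Real.sqrt (-(min (lam i) 0)))
    let Iminus : Matrix (Fin n) (Fin n) ℝ :=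
      Matrix.diagonal (fun i => if lam i < 0 then (1 : ℝ) else 0)
    let W : Fin n → ℝ := Tᵀ.mulVec U
    let Wm : Fin n → ℝ := Iminus.mulVec W
    W ⬝ᵥ Λ.mulVec W +
      U ⬝ᵥ ((2 : ℝ) • (T * Iminus * sqrtAbsΛm)).mulVec (sqrtAbsΛm.mulVec Wm - G)
      ≥ -(G ⬝ᵥ G) := by
  intro Λ s Im W Wm
  have h1 : U ⬝ᵥ ((2 : ℝ) • (T * Im * s)).mulVec (s.mulVec Wm - G)
      = 2 * (W ⬝ᵥ (Im * s).mulVec (s.mulVec Wm - G)) := by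
    rw [Matrix.smul_mulVec, dotProduct_smul, Matrix.mul_assoc,
      ← Matrix.mulVec_mulVec, Matrix.dotProduct_mulVec]
    simp [W, Matrix.mulVec_transpose]
  rw [h1, ge_iff_le]
  have hWm : Wm = fun i => (if lam i < 0 then (1:ℝ) else 0) * W i := by
    funext i; simp [Wm, Im, Matrix.mulVec_diagonal]
  rw [hWm]
  simp only [dotProduct, Matrix.diagonal_mul_diagonal, Matrix.mulVec_diagonal,
    Pi.sub_apply, Λ, s, Im, Finset.mul_sum, ← Finset.sum_add_distrib,
    ← Finset.sum_neg_distrib]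
  apply Finset.sum_le_sum
  intro i _
  set a := lam i with ha
  set w := W i
  set g := G i
  by_cases h : a < 0
  · have hmin : min a 0 = a := min_eq_left h.le
    have ht : Real.sqrt (-(min a 0)) * Real.sqrt (-(min a 0)) = -a := by
      rw [hmin, Real.mul_self_sqrt (by linarith)]
    simp only [if_pos h, one_mul]
    set t := Real.sqrt (-(min a 0)) with htd
    have e1 : w*(a*w) + 2*(w*(t*(t*w-g))) = (t*w-g)^2 - g^2 + (a + t*t)*w^2 := by
      ring
    rw [e1, ht]
    nlinarith [sq_nonneg (t*w-g)]
  · have hmin : min a 0 = 0 := min_eq_right (not_lt.mp h)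
    simp only [if_neg h, zero_mul, mul_zero]
    have : 0 ≤ a := not_lt.mp h
    nlinarith [sq_nonneg g, sq_nonneg w]
end

section
/- Let n, m be natural numbers, λ : Fin n → ℝ, Λ = diag(λᵢ), |Λ⁻| = diag(−min(λᵢ,0)), √|Λ⁻| = diag(√(−min(λᵢ,0))), I⁻ = diag(if λᵢ < 0 then 1 else 0), T a real n×n matrix, U, G ∈ ℝⁿ, W = Tᵀ U, W⁻ = I⁻ W. Suppose V, F*, F ∈ ℝᵐ satisfy Vᵀ(F* − F) = Uᵀ(2 T I⁻ √|Λ⁻| (√|Λ⁻| W⁻ − G)). Then the boundary term satisfies Wᵀ Λ W + Vᵀ(F* − F) ≥ −Gᵀ G; in particular, if the entropy flux is F^ent = Wᵀ Λ W, then F^ent + Vᵀ(F* − F) ≥ −Gᵀ G. -/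
open Matrix Real

/-- The diagonal matrix `Λ = diag(λᵢ)`. -/
noncomputable def lamMat {n : ℕ} (lam : Fin n → ℝ) : Matrix (Fin n) (Fin n) ℝ :=
  Matrix.diagonal lam

/-- The entrywise square root `√|Λ⁻| = diag(√(−min(λᵢ,0)))`. -/
noncomputable def sqrtAbsLamMinus {n : ℕ} (lam : Fin n → ℝ) : Matrix (Fin n) (Fin n) ℝ :=
  Matrix.diagonal (fun i => Real.sqrt (-(min (lam i) 0)))

/-- The indicator matrix `I⁻ = diag(if λᵢ < 0 then 1 else 0)`. -/
noncomputable def indMinus {n : ℕ} (lam : Fin n → ℝ) : Matrix (Fin n) (Fin n) ℝ :=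
  Matrix.diagonal (fun i => if lam i < 0 then (1 : ℝ) else 0)

/-- Pointwise version of Theorem 2 of the paper: any numerical boundary flux `F*`
satisfying `Vᵀ(F* − F) = Uᵀ(2 T I⁻ √|Λ⁻| (√|Λ⁻| W⁻ − G))` yields a boundary term
`Wᵀ Λ W + Vᵀ(F* − F)` bounded below solely by the data `G`; in particular for the
entropy flux `F^ent = Wᵀ Λ W`. -/
theorem flux_boundary_bound (n m : ℕ) (lam : Fin n → ℝ) (T : Matrix (Fin n) (Fin n) ℝ)
    (U G : Fin n → ℝ) (V Fstar F : Fin m → ℝ)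
    (hrel :
      V ⬝ᵥ (Fstar - F) =
        U ⬝ᵥ ((2 : ℝ) • (T * indMinus lam * sqrtAbsLamMinus lam)).mulVec
          ((sqrtAbsLamMinus lam).mulVec ((indMinus lam).mulVec (Tᵀ.mulVec U)) - G)) :
    (Tᵀ.mulVec U) ⬝ᵥ (lamMat lam).mulVec (Tᵀ.mulVec U) + V ⬝ᵥ (Fstar - F)
        ≥ -(G ⬝ᵥ G) ∧
      ∀ Fent : ℝ, Fent = (Tᵀ.mulVec U) ⬝ᵥ (lamMat lam).mulVec (Tᵀ.mulVec U) →
        Fent + V ⬝ᵥ (Fstar - F) ≥ -(G ⬝ᵥ G) := by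
  have key : (Tᵀ.mulVec U) ⬝ᵥ (lamMat lam).mulVec (Tᵀ.mulVec U) + V ⬝ᵥ (Fstar - F)
      ≥ -(G ⬝ᵥ G) := by
    set W := Tᵀ.mulVec U with hW
    have hU : ∀ x : Fin n → ℝ, U ⬝ᵥ T.mulVec x = W ⬝ᵥ x := by
      intro x
      rw [hW, Matrix.dotProduct_mulVec, ← Matrix.mulVec_transpose]
    rw [hrel]
    have hrw : U ⬝ᵥ ((2 : ℝ) • (T * indMinus lam * sqrtAbsLamMinus lam)).mulVec
          ((sqrtAbsLamMinus lam).mulVec ((indMinus lam).mulVec W) - G)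
        = 2 * (W ⬝ᵥ (indMinus lam * sqrtAbsLamMinus lam).mulVec
          ((sqrtAbsLamMinus lam).mulVec ((indMinus lam).mulVec W) - G)) := by
      rw [Matrix.smul_mulVec, dotProduct_smul, Matrix.mul_assoc,
        Matrix.mulVec_mulVec]
      rw [← Matrix.mulVec_mulVec, hU, smul_eq_mul]
    rw [hrw]
    simp only [lamMat, sqrtAbsLamMinus, indMinus, Matrix.diagonal_mul_diagonal,
      Matrix.mulVec_diagonal, dotProduct, Pi.sub_apply]
    rw [ge_iff_le, neg_le, neg_add, Finset.mul_sum, ← Finset.sum_neg_distrib,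
      ← Finset.sum_neg_distrib, ← Finset.sum_add_distrib]
    apply Finset.sum_le_sum
    intro i _
    by_cases h : lam i < 0
    · have hmin : min (lam i) 0 = lam i := min_eq_left h.le
      have hs : Real.sqrt (-(min (lam i) 0)) * Real.sqrt (-(min (lam i) 0)) = -(lam i) := by
        rw [hmin]; exact Real.mul_self_sqrt (by linarith)
      simp only [if_pos h]
      have h2 : Real.sqrt (-(min (lam i) 0)) * Real.sqrt (-(min (lam i) 0)) * (W i * W i)
          = -(lam i) * (W i * W i) := by rw [hs]
      nlinarith [sq_nonneg (Real.sqrt (-(min (lam i) 0)) * W i - G i), h2]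
    · have h0 : min (lam i) 0 = 0 := min_eq_right (not_lt.mp h)
      simp only [if_neg h, h0]
      simp
      nlinarith [sq_nonneg (G i), mul_nonneg (not_lt.mp h) (mul_self_nonneg (W i))]
  exact ⟨key, fun Fent hF => hF ▸ key⟩
end

section
/- Let u > 0 and u_ext ∈ ℝ. Define the numerical boundary flux F* = (1/3)(2 u_ext √(|u_ext| u) − u²/2) and the data G = √(|u_ext|/3)·u_ext. Then the boundary term satisfies BT := u³/3 + u(F* − u²/2) = G² − (√(u/3)·u − G)², and hence BT ≤ G² = |u_ext| u_ext²/3. -/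
open Real

/-- The new nonlinearly stable Burgers boundary flux
`F* = (1/3)(2 u_ext √(|u_ext| u) − u²/2)` gives a boundary term
`BT = u³/3 + u(F* − u²/2) = G² − (√(u/3)·u − G)² ≤ G² = |u_ext| u_ext²/3`
with data `G = √(|u_ext|/3)·u_ext`. -/
theorem burgers_new_flux_bound (u uext : ℝ) (hu : 0 < u) :
    let Fstar := (1 / 3) * (2 * uext * Real.sqrt (|uext| * u) - u ^ 2 / 2)
    let G := Real.sqrt (|uext| / 3) * uext
    let BT := u ^ 3 / 3 + u * (Fstar - u ^ 2 / 2)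
    BT = G ^ 2 - (Real.sqrt (u / 3) * u - G) ^ 2 ∧
      BT ≤ G ^ 2 ∧ G ^ 2 = |uext| * uext ^ 2 / 3 := by
  intro Fstar G BT
  have h1 : Real.sqrt (u / 3) ^ 2 = u / 3 := Real.sq_sqrt (by positivity)
  have h2 : Real.sqrt (|uext| / 3) ^ 2 = |uext| / 3 :=
    Real.sq_sqrt (by positivity)
  have h9 : Real.sqrt 9 = 3 := by
    rw [show (9:ℝ) = 3 ^ 2 by norm_num]; exact Real.sqrt_sq (by norm_num)
  have hs : Real.sqrt (|uext| * u)
      = 3 * (Real.sqrt (u / 3) * Real.sqrt (|uext| / 3)) := by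
    rw [← Real.sqrt_mul (by positivity), show u / 3 * (|uext| / 3)
      = (|uext| * u) / 9 by ring, Real.sqrt_div (by positivity), h9]
    ring
  have key : BT = G ^ 2 - (Real.sqrt (u / 3) * u - G) ^ 2 := by
    show u ^ 3 / 3 + u * ((1 / 3) * (2 * uext * Real.sqrt (|uext| * u)
        - u ^ 2 / 2) - u ^ 2 / 2)
      = (Real.sqrt (|uext| / 3) * uext) ^ 2
        - (Real.sqrt (u / 3) * u - Real.sqrt (|uext| / 3) * uext) ^ 2
    rw [hs]
    linear_combination u ^ 2 * h1
  refine ⟨key, ?_, ?_⟩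
  · rw [key]; nlinarith [sq_nonneg (Real.sqrt (u / 3) * u - G)]
  · show (Real.sqrt (|uext| / 3) * uext) ^ 2 = _
    rw [mul_pow, h2]; ring
end

section
/- Let u > 0 and u_ext ∈ ℝ, and let F*_EC = (u_ext² + u·u_ext + u²)/6 be the entropy conservative two-point flux. Then the boundary term satisfies BT := u³/3 + u(F*_EC − u²/2) = (u·u_ext² + u²·u_ext)/6. Moreover, if u_ext < 0 then this boundary term is not bounded below in u: for every C ∈ ℝ there exists u > 0 with (u·u_ext² + u²·u_ext)/6 < C. -/
open Real

/-- Using the entropy conservative two-point flux at an open Burgers boundary gives a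
boundary term `(u·u_ext² + u²·u_ext)/6` that is not bounded below independently of
the interior state `u` when `u_ext < 0`. -/
theorem burgers_ec_flux_unbounded (u uext : ℝ) (hu : 0 < u) :
    (u ^ 3 / 3 + u * ((uext ^ 2 + u * uext + u ^ 2) / 6 - u ^ 2 / 2) =
      (u * uext ^ 2 + u ^ 2 * uext) / 6) ∧
    (uext < 0 → ∀ C : ℝ, ∃ u' : ℝ, 0 < u' ∧
      (u' * uext ^ 2 + u' ^ 2 * uext) / 6 < C) := by
  constructor
  · ring
  · intro hneg C
    set v : ℝ := max 1 ((uext ^ 2 + 6 * |C| + 1) / (-uext)) with hv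
    have hpos : (0:ℝ) < v := lt_of_lt_of_le one_pos (le_max_left _ _)
    have h1 : (1:ℝ) ≤ v := le_max_left _ _
    have h2 : (uext ^ 2 + 6 * |C| + 1) / (-uext) ≤ v := le_max_right _ _
    have hne : (0:ℝ) < -uext := by linarith
    have h3 : uext ^ 2 + 6 * |C| + 1 ≤ v * (-uext) := by
      rwa [div_le_iff₀ hne] at h2
    refine ⟨v, hpos, ?_⟩
    have hC : -|C| ≤ C := neg_abs_le C
    nlinarith [mul_le_mul_of_nonneg_left h3 hpos.le, mul_le_mul_of_nonneg_right h1 (abs_nonneg C)]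
end

section
/- Let u > 0 and u_ext > 0, and let F*_LLF = (u² + u_ext²)/4 − (1/2)·max(u, u_ext)·(u − u_ext) be the local Lax-Friedrichs flux. Then the boundary term BT := u³/3 + u(F*_LLF − u²/2) satisfies: BT = −u³/6 + u·u_ext²/2 − u(u − u_ext)²/4 if u ≥ u_ext, and BT = −u³/6 + u·u_ext²/2 + u(u − u_ext)²/4 if u ≤ u_ext. Moreover, for every fixed u_ext > 0 the boundary term is not bounded below in u: for every C ∈ ℝ there exists u > u_ext with BT < C. -/
open Real

/-- The local Lax-Friedrichs boundary flux for Burgers yields the stated boundary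
term, which is not bounded below independently of the interior state `u`. -/
theorem burgers_llf_flux_unbounded (u uext : ℝ) (hu : 0 < u) (huext : 0 < uext) :
    let Fllf := (u ^ 2 + uext ^ 2) / 4 - (1 / 2) * max u uext * (u - uext)
    let BT := u ^ 3 / 3 + u * (Fllf - u ^ 2 / 2)
    ((u ≥ uext → BT = -u ^ 3 / 6 + u * uext ^ 2 / 2 - u * (u - uext) ^ 2 / 4) ∧
     (u ≤ uext → BT = -u ^ 3 / 6 + u * uext ^ 2 / 2 + u * (u - uext) ^ 2 / 4)) ∧
    (∀ C : ℝ, ∃ u' : ℝ, u' > uext ∧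
      u' ^ 3 / 3 + u' * (((u' ^ 2 + uext ^ 2) / 4 -
        (1 / 2) * max u' uext * (u' - uext)) - u' ^ 2 / 2) < C) := by
  intro Fllf BT
  refine ⟨⟨?_, ?_⟩, ?_⟩
  · intro h
    simp only [BT, Fllf, max_eq_left h]
    ring
  · intro h
    simp only [BT, Fllf, max_eq_right h]
    ring
  · intro C
    set u' : ℝ := max (2 * uext) (max 1 (-10 * C)) + 1 with hu'
    have h1 : u' > 2 * uext := lt_of_le_of_lt (le_max_left _ _) (lt_add_one _)
    have h2 : u' > 1 :=
      lt_of_le_of_lt (le_trans (le_max_left _ _) (le_max_right _ _)) (lt_add_one _)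
    have h3 : u' > -10 * C :=
      lt_of_le_of_lt (le_trans (le_max_right _ _) (le_max_right _ _)) (lt_add_one _)
    clear_value u'
    have hgt : u' > uext := by nlinarith
    refine ⟨u', hgt, ?_⟩
    rw [max_eq_left hgt.le]
    have hp : (0:ℝ) < u' := lt_trans one_pos h2
    have hA : (0:ℝ) < u' - 2 * uext := sub_pos.2 h1
    have hcube : u' ^ 3 > -10 * C := by nlinarith [mul_pos hp hp]
    have key : u' ^ 3 / 3 + u' * (((u' ^ 2 + uext ^ 2) / 4 -
        (1 / 2) * u' * (u' - uext)) - u' ^ 2 / 2) ≤ -5 * u' ^ 3 / 48 := by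
      nlinarith [mul_pos (mul_pos hA hA) hp, mul_pos (mul_pos hA huext) hp,
        mul_pos (mul_pos hA hp) hp, mul_pos huext hp]
    rcases le_or_gt 0 C with hC | hC
    · have := pow_pos hp 3
      linarith
    · linarith
end

section
/- Let g > 0, h > 0, v1, v2 ∈ ℝ, and let (n1, n2) satisfy n1² + n2² = 1. Set c = √(g h), v_n = n1 v1 + n2 v2, v_τ = −n2 v1 + n1 v2, and U = (1/√(2g))·(g h, c v_n, c v_τ) ∈ ℝ³. Then for every β ∈ ℝ, with boundary matrix A = [[2β v_n, (1−β) c, 0], [(1−β) c, v_n, 0], [0, 0, v_n]], the quadratic form equals the normal entropy flux: Uᵀ A U = (h v_n/2)(v1² + v2²) + g h² v_n = F_n^ent, independently of β. -/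
open Matrix Real

/-- The one-parameter family of boundary matrices of the skew-symmetric shallow
water formulation reproduces the normal entropy flux as a quadratic form:
`Uᵀ A U = (h v_n/2)(v1² + v2²) + g h² v_n`, independently of `β`. -/
theorem swe_boundary_matrix_quadratic_form (g h v1 v2 n1 n2 c vn vτ : ℝ)
    (hg : 0 < g) (hh : 0 < h) (hn : n1 ^ 2 + n2 ^ 2 = 1)
    (hc : c = Real.sqrt (g * h))
    (hvn : vn = n1 * v1 + n2 * v2) (hvτ : vτ = -n2 * v1 + n1 * v2) :
    ∀ β : ℝ,
      let U : Fin 3 → ℝ := (1 / Real.sqrt (2 * g)) • ![g * h, c * vn, c * vτ]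
      let A : Matrix (Fin 3) (Fin 3) ℝ :=
        !![2 * β * vn, (1 - β) * c, 0;
           (1 - β) * c, vn, 0;
           0, 0, vn]
      U ⬝ᵥ A.mulVec U = h * vn / 2 * (v1 ^ 2 + v2 ^ 2) + g * h ^ 2 * vn := by
  intro β U A
  have hc2 : c ^ 2 = g * h := by
    rw [hc, Real.sq_sqrt (by positivity)]
  have hs : Real.sqrt (2 * g) ^ 2 = 2 * g := Real.sq_sqrt (by positivity)
  have hsne : Real.sqrt (2 * g) ≠ 0 := by positivity
  have hvsum : vn ^ 2 + vτ ^ 2 = v1 ^ 2 + v2 ^ 2 := by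
    subst hvn hvτ; nlinarith [hn]
  simp only [U, A, dotProduct, Matrix.mulVec, Fin.sum_univ_three,
    Pi.smul_apply, smul_eq_mul, Matrix.cons_val_zero, Matrix.cons_val_one,
    Matrix.head_cons, Matrix.cons_val_two, Matrix.tail_cons,
    Matrix.cons_val', Matrix.empty_val', Matrix.cons_val_fin_one,
    Matrix.of_apply, Matrix.head_fin_const]
  have hp : (Real.sqrt 2 * Real.sqrt g) ^ 2 = 2 * g := by
    rw [mul_pow, Real.sq_sqrt (by norm_num : (2:ℝ) ≥ 0).le, Real.sq_sqrt hg.le]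
  field_simp
  linear_combination (4*(1-β)*g*h*vn + 2*vn*(vn^2+vτ^2)) * hc2
    + (2*g*h*vn) * hvsum
    - (h * vn * (v1 ^ 2 + v2 ^ 2) + g * h ^ 2 * vn * 2) * hs
end

section
/- Let α, v_n, c ∈ ℝ, and let T = [[α/√2, 0, α/√2], [−1/√2, 0, 1/√2], [0, 1, 0]] and Λ = diag(v_n − c, v_n, v_n + c). Then T Λ Tᵀ = [[α² v_n, α c, 0], [α c, v_n, 0], [0, 0, v_n]]. Moreover, if α = −1 + √3 and β = 2 − √3, then α² = 2β and α = 1 − β, so that T Λ Tᵀ equals the boundary matrix A = [[2β v_n, (1−β) c, 0], [(1−β) c, v_n, 0], [0, 0, v_n]]. -/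
open Matrix Real

lemma swe_main (α vn c : ℝ) :
    (!![α / Real.sqrt 2, 0, α / Real.sqrt 2;
       -(1 / Real.sqrt 2), 0, 1 / Real.sqrt 2;
       0, 1, 0] : Matrix (Fin 3) (Fin 3) ℝ) *
      Matrix.diagonal ![vn - c, vn, vn + c] *
      (!![α / Real.sqrt 2, 0, α / Real.sqrt 2;
         -(1 / Real.sqrt 2), 0, 1 / Real.sqrt 2;
         0, 1, 0] : Matrix (Fin 3) (Fin 3) ℝ)ᵀ
    = !![α ^ 2 * vn, α * c, 0; α * c, vn, 0; 0, 0, vn] := by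
  have h2 : Real.sqrt 2 * Real.sqrt 2 = 2 :=
    Real.mul_self_sqrt (by norm_num)
  have hne : Real.sqrt 2 ≠ 0 := by positivity
  have hd : (Matrix.diagonal ![vn - c, vn, vn + c] : Matrix (Fin 3) (Fin 3) ℝ)
      = !![vn - c, 0, 0; 0, vn, 0; 0, 0, vn + c] := by
    ext i j; fin_cases i <;> fin_cases j <;> simp [Matrix.diagonal_apply, Matrix.vecHead, Matrix.vecTail]
  rw [hd]
  ext i j
  fin_cases i <;> fin_cases j <;>
    simp only [Matrix.mul_apply, Fin.sum_univ_three, Matrix.transpose_apply,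
      Matrix.cons_val', Matrix.cons_val_zero, Matrix.cons_val_one,
      Matrix.head_cons, Matrix.head_fin_const, Matrix.cons_val_fin_one,
      Matrix.empty_val', Matrix.of_apply, Matrix.cons_val_two, Matrix.tail_cons, Fin.zero_eta, Fin.mk_one, Fin.reduceFinMk, Fin.isValue] <;>
    field_simp [Real.sq_sqrt (show (0:ℝ) ≤ 2 by norm_num)] <;> nlinarith [h2, Real.sqrt_nonneg 2, congrArg (· * (α ^ 2 * vn)) h2, congrArg (· * (α * c)) h2, congrArg (· * vn) h2]

/-- Congruence transformation for the shallow water boundary matrix: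
`T Λ Tᵀ = [[α² v_n, α c, 0], [α c, v_n, 0], [0, 0, v_n]]`; moreover for
`α = −1 + √3` and `β = 2 − √3` one has `α² = 2β`, `α = 1 − β`, and `T Λ Tᵀ = A`. -/
theorem swe_congruence (α vn c : ℝ) :
    let T : Matrix (Fin 3) (Fin 3) ℝ :=
      !![α / Real.sqrt 2, 0, α / Real.sqrt 2;
         -(1 / Real.sqrt 2), 0, 1 / Real.sqrt 2;
         0, 1, 0]
    let Λ : Matrix (Fin 3) (Fin 3) ℝ := Matrix.diagonal ![vn - c, vn, vn + c]
    T * Λ * Tᵀ = !![α ^ 2 * vn, α * c, 0; α * c, vn, 0; 0, 0, vn] ∧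
      (α = -1 + Real.sqrt 3 → ∀ β : ℝ, β = 2 - Real.sqrt 3 →
        α ^ 2 = 2 * β ∧ α = 1 - β ∧
          T * Λ * Tᵀ =
            !![2 * β * vn, (1 - β) * c, 0; (1 - β) * c, vn, 0; 0, 0, vn]) := by
  intro T Λ
  have hmain := swe_main α vn c
  refine ⟨hmain, ?_⟩
  intro hα β hβ
  have h3 : Real.sqrt 3 * Real.sqrt 3 = 3 :=
    Real.mul_self_sqrt (by norm_num)
  have hsq : α ^ 2 = 2 * β := by
    subst hα hβ; ring_nf; nlinarith [h3]
  have hαβ : α = 1 - β := by subst hα hβ; ring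
  refine ⟨hsq, hαβ, ?_⟩
  rw [hmain, hsq, hαβ]
end

section
/- Subcritical outflow relation. Let g > 0, let the interior state satisfy h > 0 and 0 < v_n < c, and let the exterior state satisfy h_ext > 0 and 0 < v_n^ext < c_ext, with α = −1 + √3. Define I⁻ = diag(1,0,0), |Λ⁻| = diag(c − v_n, 0, 0), |Λ⁻_ext| = diag(c_ext − v_n^ext, 0, 0), W⁻ = I⁻ Tᵀ U, G = √(|Λ⁻_ext|) · I⁻ Tᵀ U_ext, λ̄₁ = √((c − v_n)(c_ext − v_n^ext)), and the flux F* ∈ ℝ³ with components F*₁ = (α/2) h v_n + (1−α) h c + (α/(2g)) c v_n² − (α/(2g)) λ̄₁ c_ext (α c_ext − v_n^ext); F*₂ = (α/4 + 1/2) h v1 v_n + ((1−α)/2) h c v1 + (α/(4g)) c v1 v_n² + (1−α)(g h²/2) n1 + (h v_n/2)((1+α)c − v_n) n1 − (1/(4g)) λ̄₁ c_ext (α c_ext − v_n^ext)(α v1 − 2 c n1); F*₃ = the same expression with v1 replaced by v2 and n1 replaced by n2. Then Mᵀ (F* − F_n) = 2 Nᵀ S T I⁻ √(|Λ⁻|)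 (√(|Λ⁻|) W⁻ − G). -/
set_option maxHeartbeats 2000000


open Matrix Real

/-- Appendix B.1 of the paper: the subcritical outflow boundary flux satisfies the
flux–SAT relation `Mᵀ (F* − F_n) = 2 Nᵀ S T I⁻ √|Λ⁻| (√|Λ⁻| W⁻ − G)`. -/
theorem swe_subcritical_outflow_relation
    (g h v1 v2 n1 n2 hext v1e v2e c vn vτ cext vne vte α : ℝ)
    (hg : 0 < g) (hh : 0 < h) (hhe : 0 < hext) (hn : n1 ^ 2 + n2 ^ 2 = 1)
    (hc : c = Real.sqrt (g * h)) (hvn : vn = n1 * v1 + n2 * v2)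
    (hvτ : vτ = -n2 * v1 + n1 * v2)
    (hce : cext = Real.sqrt (g * hext)) (hvne : vne = n1 * v1e + n2 * v2e)
    (hvte : vte = -n2 * v1e + n1 * v2e)
    (hsub : 0 < vn ∧ vn < c) (hsube : 0 < vne ∧ vne < cext)
    (hα : α = -1 + Real.sqrt 3) :
    let T : Matrix (Fin 3) (Fin 3) ℝ :=
      !![α / Real.sqrt 2, 0, α / Real.sqrt 2;
         -(1 / Real.sqrt 2), 0, 1 / Real.sqrt 2;
         0, 1, 0]
    let M : Matrix (Fin 3) (Fin 3) ℝ := !![g, -v1 / 2, -v2 / 2; 0, 1, 0; 0, 0, 1]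
    let N : Matrix (Fin 3) (Fin 3) ℝ := !![1, 0, 0; 0, n1, n2; 0, -n2, n1]
    let S : Matrix (Fin 3) (Fin 3) ℝ :=
      (1 / Real.sqrt (2 * g)) • Matrix.diagonal ![g, c, c]
    let Iminus : Matrix (Fin 3) (Fin 3) ℝ := Matrix.diagonal ![1, 0, 0]
    let sqrtΛ : Matrix (Fin 3) (Fin 3) ℝ :=
      Matrix.diagonal ![Real.sqrt (c - vn), 0, 0]
    let sqrtΛe : Matrix (Fin 3) (Fin 3) ℝ :=
      Matrix.diagonal ![Real.sqrt (cext - vne), 0, 0]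
    let U : Fin 3 → ℝ := (1 / Real.sqrt (2 * g)) • ![g * h, c * vn, c * vτ]
    let Uext : Fin 3 → ℝ :=
      (1 / Real.sqrt (2 * g)) • ![g * hext, cext * vne, cext * vte]
    let Wm : Fin 3 → ℝ := Iminus.mulVec (Tᵀ.mulVec U)
    let G : Fin 3 → ℝ := sqrtΛe.mulVec (Iminus.mulVec (Tᵀ.mulVec Uext))
    let lam1 : ℝ := Real.sqrt ((c - vn) * (cext - vne))
    let Fn : Fin 3 → ℝ :=
      ![h * vn, h * v1 * vn + g / 2 * h ^ 2 * n1, h * v2 * vn + g / 2 * h ^ 2 * n2]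
    let Fs : Fin 3 → ℝ :=
      ![α / 2 * h * vn + (1 - α) * h * c + α / (2 * g) * c * vn ^ 2 -
          α / (2 * g) * lam1 * cext * (α * cext - vne),
        (α / 4 + 1 / 2) * h * v1 * vn + (1 - α) / 2 * h * c * v1 +
          α / (4 * g) * c * v1 * vn ^ 2 + (1 - α) * (g * h ^ 2 / 2) * n1 +
          h * vn / 2 * ((1 + α) * c - vn) * n1 -
          1 / (4 * g) * lam1 * cext * (α * cext - vne) * (α * v1 - 2 * c * n1),
        (α / 4 + 1 / 2) * h * v2 * vn + (1 - α) / 2 * h * c * v2 +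
          α / (4 * g) * c * v2 * vn ^ 2 + (1 - α) * (g * h ^ 2 / 2) * n2 +
          h * vn / 2 * ((1 + α) * c - vn) * n2 -
          1 / (4 * g) * lam1 * cext * (α * cext - vne) * (α * v2 - 2 * c * n2)]
    Mᵀ.mulVec (Fs - Fn) =
      (2 : ℝ) • (Nᵀ * S * T * Iminus * sqrtΛ).mulVec (sqrtΛ.mulVec Wm - G) := by
  intro T M N S Iminus sqrtΛ sqrtΛe U Uext Wm G lam1 Fn Fs
  obtain ⟨hvn0, hvnc⟩ := hsub
  obtain ⟨hvne0, hvnec⟩ := hsube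
  have hcv : (0:ℝ) ≤ c - vn := by linarith
  have hcve : (0:ℝ) ≤ cext - vne := by linarith
  have hc0 : 0 < c := lt_trans hvn0 hvnc
  have hce0 : 0 < cext := lt_trans hvne0 hvnec
  have hc2 : c ^ 2 = g * h := by rw [hc]; exact Real.sq_sqrt (by positivity)
  have hce2 : cext ^ 2 = g * hext := by rw [hce]; exact Real.sq_sqrt (by positivity)
  have hg' : g ≠ 0 := ne_of_gt hg
  funext i
  fin_cases i <;>
    simp [T, M, N, S, Iminus, sqrtΛ, sqrtΛe, U, Uext, Wm, G, lam1, Fn, Fs,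
      Matrix.mulVec, Matrix.mul_apply, dotProduct, Fin.sum_univ_three,
      Matrix.diagonal, Matrix.smul_apply, Matrix.vecHead, Matrix.vecTail,
      Matrix.transpose_apply, Function.comp]
  all_goals rw [Real.sqrt_mul hcv, hα]
  all_goals set p := Real.sqrt (c - vn) with hp
  all_goals set q := Real.sqrt (cext - vne) with hq
  all_goals set s := Real.sqrt 2 with hs
  all_goals set r := Real.sqrt g with hr
  all_goals set t := Real.sqrt 3 with ht
  all_goals have hp2 : c - vn = p ^ 2 := (Real.sq_sqrt hcv).symm
  all_goals have hq2 : cext - vne = q ^ 2 := (Real.sq_sqrt hcve).symm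
  all_goals have hs2 : s ^ 2 = 2 := Real.sq_sqrt (by norm_num)
  all_goals have ht2 : t ^ 2 = 3 := Real.sq_sqrt (by norm_num)
  all_goals have hgr : g = r ^ 2 := (Real.sq_sqrt hg.le).symm
  all_goals have hr0 : r ≠ 0 := by rw [hr]; positivity
  all_goals have hs0 : s ≠ 0 := by rw [hs]; positivity
  all_goals have hvnp : vn = c - p ^ 2 := by rw [← hp2]; ring
  all_goals have hvnq : vne = cext - q ^ 2 := by rw [← hq2]; ring
  all_goals have hhc : h = c ^ 2 / r ^ 2 := by rw [← hgr]; field_simp; linarith [hc2]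
  all_goals have hhe2 : hext = cext ^ 2 / r ^ 2 := by rw [← hgr]; field_simp; linarith [hce2]
  all_goals clear_value p q s r t
  all_goals clear hp hq hs hr ht hc hce hvn hvτ hvne hvte hα T M N S Iminus sqrtΛ sqrtΛe U Uext Wm G lam1 Fn Fs
  all_goals rw [hvnp, hvnq, hhc, hhe2, hgr]
  all_goals clear hvnp hvnq hhc hhe2 hgr hc2 hce2 hcv hcve
  all_goals field_simp
  all_goals ring_nf
  all_goals have hs6 : s ^ 6 = 8 := by rw [show s ^ 6 = (s ^ 2) ^ 3 by ring, hs2]; norm_num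
  all_goals have hs4 : s ^ 4 = 4 := by rw [show s ^ 4 = (s ^ 2) ^ 2 by ring, hs2]; norm_num
  all_goals simp only [hs6, hs4, hs2, ht2]
  all_goals ring
end

section
/- Supercritical inflow relation. Let g > 0, let the interior state satisfy h > 0 and v_n < −c, and let the exterior state satisfy h_ext > 0 and v_n^ext < −c_ext, with α = −1 + √3. Define I⁻ = diag(1,1,1), |Λ⁻| = diag(|v_n| + c, |v_n|, |v_n| − c), |Λ⁻_ext| = diag(|v_n^ext| + c_ext, |v_n^ext|, |v_n^ext| − c_ext), W⁻ = Tᵀ U, G = √(|Λ⁻_ext|) · Tᵀ U_ext, λ̄₁ = √((|v_n| + c)(|v_n^ext| + c_ext)), λ̄₂ = √(|v_n|·|v_n^ext|), λ̄₃ = √((|v_n| − c)(|v_n^ext| − c_ext)), h̄ = √(h·h_ext), and the flux F* ∈ ℝ³ with components F*₁ = (α − 1) h v_n − (α/(2g)) λ̄₁ c_ext (α c_ext − v_n^ext) − (α/(2g)) λ̄₃ c_ext (α c_ext + v_n^ext); F*₂ = (α/2 − 1) h v1 v_n + (1 − 2α)(g h²/2) n1 − (1/(4g)) λ̄₁ c_ext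 (α c_ext − v_n^ext)(α v1 − 2 c n1) − (1/(4g)) λ̄₃ c_ext (α c_ext + v_n^ext)(α v1 + 2 c n1) + λ̄₂ h̄ v_τ^ext n2; F*₃ = the same expression with v1 replaced by v2, n1 replaced by n2 in all terms except the last, and last term −λ̄₂ h̄ v_τ^ext n1. Then Mᵀ (F* − F_n) = 2 Nᵀ S T I⁻ √(|Λ⁻|) (√(|Λ⁻|) W⁻ − G). -/
open Matrix Real

set_option maxHeartbeats 2000000 in
/-- Appendix B.3 of the paper: the supercritical inflow boundary flux satisfies the
flux–SAT relation `Mᵀ (F* − F_n) = 2 Nᵀ S T I⁻ √|Λ⁻| (√|Λ⁻| W⁻ − G)`. -/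
theorem swe_supercritical_inflow_relation
    (g h v1 v2 n1 n2 hext v1e v2e c vn vτ cext vne vte α : ℝ)
    (hg : 0 < g) (hh : 0 < h) (hhe : 0 < hext) (hn : n1 ^ 2 + n2 ^ 2 = 1)
    (hc : c = Real.sqrt (g * h)) (hvn : vn = n1 * v1 + n2 * v2)
    (hvτ : vτ = -n2 * v1 + n1 * v2)
    (hce : cext = Real.sqrt (g * hext)) (hvne : vne = n1 * v1e + n2 * v2e)
    (hvte : vte = -n2 * v1e + n1 * v2e)
    (hsup : vn < -c) (hsupe : vne < -cext)
    (hα : α = -1 + Real.sqrt 3) :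
    let T : Matrix (Fin 3) (Fin 3) ℝ :=
      !![α / Real.sqrt 2, 0, α / Real.sqrt 2;
         -(1 / Real.sqrt 2), 0, 1 / Real.sqrt 2;
         0, 1, 0]
    let M : Matrix (Fin 3) (Fin 3) ℝ := !![g, -v1 / 2, -v2 / 2; 0, 1, 0; 0, 0, 1]
    let N : Matrix (Fin 3) (Fin 3) ℝ := !![1, 0, 0; 0, n1, n2; 0, -n2, n1]
    let S : Matrix (Fin 3) (Fin 3) ℝ :=
      (1 / Real.sqrt (2 * g)) • Matrix.diagonal ![g, c, c]
    let Iminus : Matrix (Fin 3) (Fin 3) ℝ := Matrix.diagonal ![1, 1, 1]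
    let sqrtΛ : Matrix (Fin 3) (Fin 3) ℝ :=
      Matrix.diagonal ![Real.sqrt (|vn| + c), Real.sqrt |vn|, Real.sqrt (|vn| - c)]
    let sqrtΛe : Matrix (Fin 3) (Fin 3) ℝ :=
      Matrix.diagonal
        ![Real.sqrt (|vne| + cext), Real.sqrt |vne|, Real.sqrt (|vne| - cext)]
    let U : Fin 3 → ℝ := (1 / Real.sqrt (2 * g)) • ![g * h, c * vn, c * vτ]
    let Uext : Fin 3 → ℝ :=
      (1 / Real.sqrt (2 * g)) • ![g * hext, cext * vne, cext * vte]
    let Wm : Fin 3 → ℝ := Tᵀ.mulVec U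
    let G : Fin 3 → ℝ := sqrtΛe.mulVec (Tᵀ.mulVec Uext)
    let lam1 : ℝ := Real.sqrt ((|vn| + c) * (|vne| + cext))
    let lam2 : ℝ := Real.sqrt (|vn| * |vne|)
    let lam3 : ℝ := Real.sqrt ((|vn| - c) * (|vne| - cext))
    let hbar : ℝ := Real.sqrt (h * hext)
    let Fn : Fin 3 → ℝ :=
      ![h * vn, h * v1 * vn + g / 2 * h ^ 2 * n1, h * v2 * vn + g / 2 * h ^ 2 * n2]
    let Fs : Fin 3 → ℝ :=
      ![(α - 1) * h * vn - α / (2 * g) * lam1 * cext * (α * cext - vne) -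
          α / (2 * g) * lam3 * cext * (α * cext + vne),
        (α / 2 - 1) * h * v1 * vn + (1 - 2 * α) * (g * h ^ 2 / 2) * n1 -
          1 / (4 * g) * lam1 * cext * (α * cext - vne) * (α * v1 - 2 * c * n1) -
          1 / (4 * g) * lam3 * cext * (α * cext + vne) * (α * v1 + 2 * c * n1) +
          lam2 * hbar * vte * n2,
        (α / 2 - 1) * h * v2 * vn + (1 - 2 * α) * (g * h ^ 2 / 2) * n2 -
          1 / (4 * g) * lam1 * cext * (α * cext - vne) * (α * v2 - 2 * c * n2) -
          1 / (4 * g) * lam3 * cext * (α * cext + vne) * (α * v2 + 2 * c * n2) -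
          lam2 * hbar * vte * n1]
    Mᵀ.mulVec (Fs - Fn) =
      (2 : ℝ) • (Nᵀ * S * T * Iminus * sqrtΛ).mulVec (sqrtΛ.mulVec Wm - G) := by
  have hcpos : 0 < c := by rw [hc]; exact Real.sqrt_pos.2 (by positivity)
  have hcepos : 0 < cext := by rw [hce]; exact Real.sqrt_pos.2 (by positivity)
  have hvnneg : vn < 0 := lt_trans hsup (by linarith)
  have hvneneg : vne < 0 := lt_trans hsupe (by linarith)
  have habs : |vn| = -vn := abs_of_neg hvnneg
  have habse : |vne| = -vne := abs_of_neg hvneneg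
  have h1 : (0:ℝ) ≤ -vn + c := by linarith
  have h2 : (0:ℝ) ≤ -vn := by linarith
  have h3 : (0:ℝ) ≤ -vn - c := by linarith
  have h1e : (0:ℝ) ≤ -vne + cext := by linarith
  have h2e : (0:ℝ) ≤ -vne := by linarith
  have h3e : (0:ℝ) ≤ -vne - cext := by linarith
  intro T M N S Iminus sqrtΛ sqrtΛe U Uext Wm G lam1 lam2 lam3 hbar Fn Fs
  funext i
  fin_cases i <;>
    simp only [T, M, N, S, Iminus, sqrtΛ, sqrtΛe, U, Uext, Wm, G, lam1, lam2, lam3, hbar, Fn, Fs,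
      Matrix.mulVec, dotProduct, Fin.sum_univ_three, Matrix.mul_apply,
      Matrix.transpose_apply, Matrix.diagonal, Matrix.of_apply, Pi.sub_apply, Pi.smul_apply,
      smul_eq_mul, Matrix.cons_val', Matrix.cons_val_zero, Matrix.cons_val_one, Matrix.head_cons,
      Matrix.empty_val', Matrix.cons_val_fin_one, Matrix.head_fin_const, Matrix.smul_apply,
      Fin.isValue, Matrix.cons_val_two, Matrix.tail_cons, reduceIte, if_true, if_false, Fin.reduceEq,
      Fin.zero_eta, Fin.mk_one, Fin.reduceFinMk] <;>
    rw [habs, habse]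
  all_goals
    try rw [Real.sqrt_mul h1 (-vne + cext)]
    try rw [Real.sqrt_mul h2 (-vne)]
    try rw [Real.sqrt_mul h3 (-vne - cext)]
    try rw [Real.sqrt_mul hh.le hext]
    set s2 := Real.sqrt 2 with hs2def
    set q := Real.sqrt (2 * g) with hqdef
    set sh := Real.sqrt h with hshdef
    set she := Real.sqrt hext with hshedef
    set A := Real.sqrt (-vn + c) with hAdef
    set B := Real.sqrt (-vn) with hBdef
    set D := Real.sqrt (-vn - c) with hDdef
    set Ae := Real.sqrt (-vne + cext) with hAedef
    set Be := Real.sqrt (-vne) with hBedef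
    set De := Real.sqrt (-vne - cext) with hDedef
    have rs2 : s2 ^ 2 = 2 := Real.sq_sqrt (by norm_num)
    have rq : q ^ 2 = 2 * g := Real.sq_sqrt (by positivity)
    have rsh : sh ^ 2 = h := Real.sq_sqrt hh.le
    have rshe : she ^ 2 = hext := Real.sq_sqrt hhe.le
    have rA : A ^ 2 = -vn + c := Real.sq_sqrt h1
    have rB : B ^ 2 = -vn := Real.sq_sqrt h2
    have rD : D ^ 2 = -vn - c := Real.sq_sqrt h3
    have rAe : Ae ^ 2 = -vne + cext := Real.sq_sqrt h1e
    have rBe : Be ^ 2 = -vne := Real.sq_sqrt h2e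
    have rDe : De ^ 2 = -vne - cext := Real.sq_sqrt h3e
    have rc : c ^ 2 = g * h := by rw [hc]; exact Real.sq_sqrt (by positivity)
    have rce : cext ^ 2 = g * hext := by rw [hce]; exact Real.sq_sqrt (by positivity)
    have ral : α ^ 2 = 2 - 2 * α := by
      have hs3 : Real.sqrt 3 ^ 2 = 3 := Real.sq_sqrt (by norm_num)
      linear_combination (α + 1 + Real.sqrt 3) * hα + hs3
    have rn2 : n2 ^ 2 = 1 - n1 ^ 2 := by linear_combination hn
    have hs2pos : 0 < s2 := Real.sqrt_pos.2 (by norm_num)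
    have hqpos : 0 < q := Real.sqrt_pos.2 (by positivity)
    have rgi : g * g⁻¹ = 1 := mul_inv_cancel₀ hg.ne'
    have rs2i : s2⁻¹ = s2 / 2 := by
      rw [eq_div_iff (by norm_num : (2:ℝ) ≠ 0)]
      field_simp
      linear_combination (-1 : ℝ) * rs2
    have rqi : q⁻¹ = q * g⁻¹ / 2 := by
      rw [eq_div_iff (by norm_num : (2:ℝ) ≠ 0)]
      field_simp
      linear_combination (-1 : ℝ) * rq
    have rcc : c * cext = g * (sh * she) := by
      rw [hc, hce, hshdef, hshedef,
        ← Real.sqrt_mul (by positivity : (0:ℝ) ≤ g * h),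
        ← Real.sqrt_mul hh.le,
        show g * h * (g * hext) = g ^ 2 * (h * hext) by ring,
        Real.sqrt_mul (by positivity : (0:ℝ) ≤ g ^ 2), Real.sqrt_sq hg.le]
  · linear_combination (norm := ring)
      (2 * g * c * α * vn * s2⁻¹^2 * q⁻¹^2 + -4 * g^2 * h * s2⁻¹^2 * q⁻¹^2 + 4 * g^2 * h * α * s2⁻¹^2 * q⁻¹^2) * rA + (-2 * g * c * α * vn * s2⁻¹^2 * q⁻¹^2 + -4 * g^2 * h * s2⁻¹^2 * q⁻¹^2 + 4 * g^2 * h * α * s2⁻¹^2 * q⁻¹^2) * rD + (2 * g^2 * hext * D * De * s2⁻¹^2 * q⁻¹^2 + (-1/2) * g^2 * hext * D * De * g⁻¹ + 2 * g^2 * hext * A * Ae * s2⁻¹^2 * q⁻¹^2 + (-1/2) * g^2 * hext * A * Ae * g⁻¹ + -2 * g^2 * h * D^2 * s2⁻¹^2 * q⁻¹^2 + -2 * g^2 * h * A^2 * s2⁻¹^2 * q⁻¹^2) * ral + (4 * g * α * vn * s2⁻¹^2 * q⁻¹^2) * rc + ((-1/2) * g * α^2 * D * De * g⁻¹ + (-1/2)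 * g * α^2 * A * Ae * g⁻¹) * rce + ((1/2) * cext * α * vne * D * De * q * q⁻¹ + (-1/2) * cext * α * vne * A * Ae * q * q⁻¹ + 1 * g * hext * D * De * q * q⁻¹ + 1 * g * hext * A * Ae * q * q⁻¹ + -1 * g * hext * α * D * De * q * q⁻¹ + -1 * g * hext * α * A * Ae * q * q⁻¹ + 2 * g * h * vn + 2 * g * h * vn * q * q⁻¹ + -1 * g * h * α * vn + -1 * g * h * α * vn * q * q⁻¹) * rgi + ((1/4) * cext * α * vne * D * De * g⁻¹ + (-1/4) * cext * α * vne * A * Ae * g⁻¹ + (1/2) * g * hext * D * De * g⁻¹ + (1/2) * g * hext * A * Ae * g⁻¹ + (-1/2) * g * hext * α * D * De * g⁻¹ + (-1/2) * g * hext * α * A * Ae * g⁻¹ + 1 * g * h * vn * g⁻¹ + (-1/2) * g * h * α * vn * g⁻¹) * rq + ((1/2) * cext * α * vne * D * De * q + (-1/2) * cext * α * vne * A * Ae * q + 1 * g * cext * α * vne * D * De * q⁻¹ + -1 * g * cext * α * vne * A * Ae * q⁻¹ + 1 * g * hext * D * De * q + 1 * g * hext * A * Ae * q + -1 * g * hext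 * α * D * De * q + -1 * g * hext * α * A * Ae * q + 2 * g * h * vn * q + -1 * g * h * α * vn * q + 2 * g^2 * hext * D * De * q⁻¹ + 2 * g^2 * hext * A * Ae * q⁻¹ + -2 * g^2 * hext * α * D * De * q⁻¹ + -2 * g^2 * hext * α * A * Ae * q⁻¹ + 4 * g^2 * h * vn * q⁻¹ + -2 * g^2 * h * α * vn * q⁻¹) * rqi + ((1/2) * g * cext * α * vne * D * De * q⁻¹^2 + (-1/2) * g * cext * α * vne * A * Ae * q⁻¹^2 + 1 * g^2 * hext * D * De * q⁻¹^2 + 1 * g^2 * hext * A * Ae * q⁻¹^2 + -1 * g^2 * hext * α * D * De * q⁻¹^2 + -1 * g^2 * hext * α * A * Ae * q⁻¹^2 + 2 * g^2 * h * vn * q⁻¹^2 + -1 * g^2 * h * α * vn * q⁻¹^2) * rs2 + (2 * g * cext * α * vne * D * De * s2⁻¹ * q⁻¹^2 + 1 * g * cext * α * vne * D * De * s2 * q⁻¹^2 + -2 * g * cext * α * vne * A * Ae * s2⁻¹ * q⁻¹^2 + -1 * g * cext * α * vne * A * Ae * s2 * q⁻¹^2 + 4 * g^2 * hext * D * De *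 s2⁻¹ * q⁻¹^2 + 2 * g^2 * hext * D * De * s2 * q⁻¹^2 + 4 * g^2 * hext * A * Ae * s2⁻¹ * q⁻¹^2 + 2 * g^2 * hext * A * Ae * s2 * q⁻¹^2 + -4 * g^2 * hext * α * D * De * s2⁻¹ * q⁻¹^2 + -2 * g^2 * hext * α * D * De * s2 * q⁻¹^2 + -4 * g^2 * hext * α * A * Ae * s2⁻¹ * q⁻¹^2 + -2 * g^2 * hext * α * A * Ae * s2 * q⁻¹^2 + 8 * g^2 * h * vn * s2⁻¹ * q⁻¹^2 + 4 * g^2 * h * vn * s2 * q⁻¹^2 + -4 * g^2 * h * α * vn * s2⁻¹ * q⁻¹^2 + -2 * g^2 * h * α * vn * s2 * q⁻¹^2) * rs2i + 0 * hvn + 0 * hvne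
  · linear_combination (norm := ring)
      (-2 * n1 * g * h * vn * s2⁻¹^2 * q⁻¹^2 + 2 * n1 * g * h * c * α * s2⁻¹^2 * q⁻¹^2) * rA + (2 * n2 * g * h * vτ * q⁻¹^2) * rB + (-2 * n1 * g * h * vn * s2⁻¹^2 * q⁻¹^2 + -2 * n1 * g * h * c * α * s2⁻¹^2 * q⁻¹^2) * rD + (2 * n2 * vτ * B^2 * q⁻¹^2 + -2 * n1 * vn * D^2 * s2⁻¹^2 * q⁻¹^2 + -2 * n1 * vn * A^2 * s2⁻¹^2 * q⁻¹^2 + 4 * n1 * g * h * α * s2⁻¹^2 * q⁻¹^2) * rc + (-2 * n2 * vte * B * Be * q⁻¹^2 + 2 * n1 * vne * D * De * s2⁻¹^2 * q⁻¹^2 + (-1/2) * n1 * vne * D * De * g⁻¹ + 2 * n1 * vne * A * Ae * s2⁻¹^2 * q⁻¹^2 + (-1/2) * n1 * vne * A * Ae * g⁻¹) * rcc + ((-1/2) * n1 * c * α * D * De * g⁻¹ + (1/2) * n1 * c * α * A * Ae * g⁻¹) * rce + (-1 * n2 * vte * B * Be * sh * she + -1 * n2 * vte * B * Be * q * sh *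 she * q⁻¹ + -1 * n2 * h * vn * vτ + -1 * n2 * h * vn * vτ * q * q⁻¹ + (1/2) * n1 * vne * D * De * q * sh * she * q⁻¹ + (1/2) * n1 * vne * A * Ae * q * sh * she * q⁻¹ + (1/2) * n1 * hext * c * α * D * De * q * q⁻¹ + (-1/2) * n1 * hext * c * α * A * Ae * q * q⁻¹ + 1 * n1 * h * vn^2 + 1 * n1 * h * vn^2 * q * q⁻¹ + 1 * n1 * g * h^2 * α + 1 * n1 * g * h^2 * α * q * q⁻¹) * rgi + (-1 * v2 * h * vτ + 1 * v2^2 * n1 * h + 1 * v1^2 * n1 * h) * rn2 + ((-1/2) * n2 * vte * B * Be * sh * she * g⁻¹ + (-1/2) * n2 * h * vn * vτ * g⁻¹ + (1/4) * n1 * vne * D * De * sh * she * g⁻¹ + (1/4) * n1 * vne * A * Ae * sh * she * g⁻¹ + (1/4) * n1 * hext * c * α * D * De * g⁻¹ + (-1/4) * n1 * hext * c * α * A * Ae * g⁻¹ + (1/2) * n1 * h * vn^2 * g⁻¹ + (1/2) * n1 * g * h^2 * α * g⁻¹) * rq + (-1 * n2 * vte * B * Be * q * sh * she + -1 * n2 *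 h * vn * vτ * q + -2 * n2 * g * vte * B * Be * sh * she * q⁻¹ + -2 * n2 * g * h * vn * vτ * q⁻¹ + (1/2) * n1 * vne * D * De * q * sh * she + (1/2) * n1 * vne * A * Ae * q * sh * she + (1/2) * n1 * hext * c * α * D * De * q + (-1/2) * n1 * hext * c * α * A * Ae * q + 1 * n1 * h * vn^2 * q + 1 * n1 * g * vne * D * De * sh * she * q⁻¹ + 1 * n1 * g * vne * A * Ae * sh * she * q⁻¹ + 1 * n1 * g * hext * c * α * D * De * q⁻¹ + -1 * n1 * g * hext * c * α * A * Ae * q⁻¹ + 2 * n1 * g * h * vn^2 * q⁻¹ + 1 * n1 * g * h^2 * α * q + 2 * n1 * g^2 * h^2 * α * q⁻¹) * rqi + ((1/2) * n1 * g * vne * D * De * sh * she * q⁻¹^2 + (1/2) * n1 * g * vne * A * Ae * sh * she * q⁻¹^2 + (1/2) * n1 * g * hext * c * α * D * De * q⁻¹^2 + (-1/2) * n1 * g * hext * c * α * A * Ae * q⁻¹^2 + 1 * n1 * g * h * vn^2 * q⁻¹^2 + 1 * n1 * g^2 * h^2 * α * q⁻¹^2) * rs2 + (2 * n1 * g * vne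 * D * De * sh * she * s2⁻¹ * q⁻¹^2 + 1 * n1 * g * vne * D * De * s2 * sh * she * q⁻¹^2 + 2 * n1 * g * vne * A * Ae * sh * she * s2⁻¹ * q⁻¹^2 + 1 * n1 * g * vne * A * Ae * s2 * sh * she * q⁻¹^2 + 2 * n1 * g * hext * c * α * D * De * s2⁻¹ * q⁻¹^2 + 1 * n1 * g * hext * c * α * D * De * s2 * q⁻¹^2 + -2 * n1 * g * hext * c * α * A * Ae * s2⁻¹ * q⁻¹^2 + -1 * n1 * g * hext * c * α * A * Ae * s2 * q⁻¹^2 + 4 * n1 * g * h * vn^2 * s2⁻¹ * q⁻¹^2 + 2 * n1 * g * h * vn^2 * s2 * q⁻¹^2 + 4 * n1 * g^2 * h^2 * α * s2⁻¹ * q⁻¹^2 + 2 * n1 * g^2 * h^2 * α * s2 * q⁻¹^2) * rs2i + (-1 * n2 * h * vτ + 1 * n1 * h * vn + 1 * v2 * n1 * n2 * h + -1 * v1 * h + 1 * v1 * n1^2 * h) * hvn + 0 * hvne + (-1 * v2 * h + 1 * v2 * n1^2 * h + -1 * v1 * n1 * n2 * h) * hvτ + 0 * hvte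
  · linear_combination (norm := ring)
      (-2 * n2 * g * h * vn * s2⁻¹^2 * q⁻¹^2 + 2 * n2 * g * h * c * α * s2⁻¹^2 * q⁻¹^2) * rA + (-2 * n1 * g * h * vτ * q⁻¹^2) * rB + (-2 * n2 * g * h * vn * s2⁻¹^2 * q⁻¹^2 + -2 * n2 * g * h * c * α * s2⁻¹^2 * q⁻¹^2) * rD + (-2 * n2 * vn * D^2 * s2⁻¹^2 * q⁻¹^2 + -2 * n2 * vn * A^2 * s2⁻¹^2 * q⁻¹^2 + 4 * n2 * g * h * α * s2⁻¹^2 * q⁻¹^2 + -2 * n1 * vτ * B^2 * q⁻¹^2) * rc + (2 * n2 * vne * D * De * s2⁻¹^2 * q⁻¹^2 + (-1/2) * n2 * vne * D * De * g⁻¹ + 2 * n2 * vne * A * Ae * s2⁻¹^2 * q⁻¹^2 + (-1/2) * n2 * vne * A * Ae * g⁻¹ + 2 * n1 * vte * B * Be * q⁻¹^2) * rcc + ((-1/2) * n2 * c * α * D * De * g⁻¹ + (1/2) * n2 * c * α * A * Ae * g⁻¹) * rce + ((1/2) * n2 * vne * D * De * q * sh * she * q⁻¹ + (1/2) * n2 *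 vne * A * Ae * q * sh * she * q⁻¹ + (1/2) * n2 * hext * c * α * D * De * q * q⁻¹ + (-1/2) * n2 * hext * c * α * A * Ae * q * q⁻¹ + 1 * n2 * h * vn^2 + 1 * n2 * h * vn^2 * q * q⁻¹ + 1 * n2 * g * h^2 * α + 1 * n2 * g * h^2 * α * q * q⁻¹ + 1 * n1 * vte * B * Be * sh * she + 1 * n1 * vte * B * Be * q * sh * she * q⁻¹ + 1 * n1 * h * vn * vτ + 1 * n1 * h * vn * vτ * q * q⁻¹) * rgi + (1 * v2 * h * vn) * rn2 + ((1/4) * n2 * vne * D * De * sh * she * g⁻¹ + (1/4) * n2 * vne * A * Ae * sh * she * g⁻¹ + (1/4) * n2 * hext * c * α * D * De * g⁻¹ + (-1/4) * n2 * hext * c * α * A * Ae * g⁻¹ + (1/2) * n2 * h * vn^2 * g⁻¹ + (1/2) * n2 * g * h^2 * α * g⁻¹ + (1/2) * n1 * vte * B * Be * sh * she * g⁻¹ + (1/2) * n1 * h * vn * vτ * g⁻¹) * rq + ((1/2) * n2 * vne * D * De * q * sh * she + (1/2) * n2 * vne * A * Ae * q * sh * she + (1/2) * n2 * hext * c * α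 * D * De * q + (-1/2) * n2 * hext * c * α * A * Ae * q + 1 * n2 * h * vn^2 * q + 1 * n2 * g * vne * D * De * sh * she * q⁻¹ + 1 * n2 * g * vne * A * Ae * sh * she * q⁻¹ + 1 * n2 * g * hext * c * α * D * De * q⁻¹ + -1 * n2 * g * hext * c * α * A * Ae * q⁻¹ + 2 * n2 * g * h * vn^2 * q⁻¹ + 1 * n2 * g * h^2 * α * q + 2 * n2 * g^2 * h^2 * α * q⁻¹ + 1 * n1 * vte * B * Be * q * sh * she + 1 * n1 * h * vn * vτ * q + 2 * n1 * g * vte * B * Be * sh * she * q⁻¹ + 2 * n1 * g * h * vn * vτ * q⁻¹) * rqi + ((1/2) * n2 * g * vne * D * De * sh * she * q⁻¹^2 + (1/2) * n2 * g * vne * A * Ae * sh * she * q⁻¹^2 + (1/2) * n2 * g * hext * c * α * D * De * q⁻¹^2 + (-1/2) * n2 * g * hext * c * α * A * Ae * q⁻¹^2 + 1 * n2 * g * h * vn^2 * q⁻¹^2 + 1 * n2 * g^2 * h^2 * α * q⁻¹^2) * rs2 + (2 * n2 * g * vne * D * De * sh * she * s2⁻¹ * q⁻¹^2 + 1 * n2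 * g * vne * D * De * s2 * sh * she * q⁻¹^2 + 2 * n2 * g * vne * A * Ae * sh * she * s2⁻¹ * q⁻¹^2 + 1 * n2 * g * vne * A * Ae * s2 * sh * she * q⁻¹^2 + 2 * n2 * g * hext * c * α * D * De * s2⁻¹ * q⁻¹^2 + 1 * n2 * g * hext * c * α * D * De * s2 * q⁻¹^2 + -2 * n2 * g * hext * c * α * A * Ae * s2⁻¹ * q⁻¹^2 + -1 * n2 * g * hext * c * α * A * Ae * s2 * q⁻¹^2 + 4 * n2 * g * h * vn^2 * s2⁻¹ * q⁻¹^2 + 2 * n2 * g * h * vn^2 * s2 * q⁻¹^2 + 4 * n2 * g^2 * h^2 * α * s2⁻¹ * q⁻¹^2 + 2 * n2 * g^2 * h^2 * α * s2 * q⁻¹^2) * rs2i + (1 * n2 * h * vn + 1 * n1 * h * vτ + -1 * v2 * n1^2 * h + 1 * v1 * n1 * n2 * h) * hvn + 0 * hvne + (1 * v2 * n1 * n2 * h + 1 * v1 * n1^2 * h) * hvτ + 0 * hvte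
end

section
/- Consistency of the subcritical outflow flux. Let g > 0, h > 0, v1, v2 ∈ ℝ with unit normal n1² + n2² = 1, c = √(g h), v_n = n1 v1 + n2 v2, and assume 0 < v_n < c. Let α = −1 + √3 (so α² + 2α = 2). When the external state equals the internal state (h_ext = h, v1_ext = v1, v2_ext = v2, hence c_ext = c, v_n^ext = v_n, λ̄₁ = c − v_n), the subcritical outflow flux F* with components F*₁ = (α/2) h v_n + (1−α) h c + (α/(2g)) c v_n² − (α/(2g)) (c − v_n) c (α c − v_n); F*₂ = (α/4 + 1/2) h v1 v_n + ((1−α)/2) h c v1 + (α/(4g)) c v1 v_n² + (1−α)(g h²/2) n1 + (h v_n/2)((1+α)c − v_n) n1 − (1/(4g)) (c − v_n) c (α c − v_n)(α v1 − 2 c n1); F*₃ = the same with (v1, n1) replaced by (v2, n2); equals the normal flux: F* = (h v_n, h v1 v_n + (g/2) h² n1, h v2 v_n + (g/2) h² n2). -/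
open Matrix Real

/-- Consistency of the subcritical outflow flux: when the external state equals the
internal state, the subcritical outflow boundary flux equals the normal flux. -/
theorem swe_subcritical_outflow_consistent (g h v1 v2 n1 n2 c vn α : ℝ)
    (hg : 0 < g) (hh : 0 < h) (hn : n1 ^ 2 + n2 ^ 2 = 1)
    (hc : c = Real.sqrt (g * h)) (hvn : vn = n1 * v1 + n2 * v2)
    (hsub : 0 < vn ∧ vn < c) (hα : α = -1 + Real.sqrt 3) :
    let Fs : Fin 3 → ℝ :=
      ![α / 2 * h * vn + (1 - α) * h * c + α / (2 * g) * c * vn ^ 2 -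
          α / (2 * g) * (c - vn) * c * (α * c - vn),
        (α / 4 + 1 / 2) * h * v1 * vn + (1 - α) / 2 * h * c * v1 +
          α / (4 * g) * c * v1 * vn ^ 2 + (1 - α) * (g * h ^ 2 / 2) * n1 +
          h * vn / 2 * ((1 + α) * c - vn) * n1 -
          1 / (4 * g) * (c - vn) * c * (α * c - vn) * (α * v1 - 2 * c * n1),
        (α / 4 + 1 / 2) * h * v2 * vn + (1 - α) / 2 * h * c * v2 +
          α / (4 * g) * c * v2 * vn ^ 2 + (1 - α) * (g * h ^ 2 / 2) * n2 +
          h * vn / 2 * ((1 + α) * c - vn) * n2 -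
          1 / (4 * g) * (c - vn) * c * (α * c - vn) * (α * v2 - 2 * c * n2)]
    Fs = ![h * vn, h * v1 * vn + g / 2 * h ^ 2 * n1,
           h * v2 * vn + g / 2 * h ^ 2 * n2] := by
  intro Fs
  have hg' : g ≠ 0 := ne_of_gt hg
  have hc2 : c ^ 2 = g * h := by
    rw [hc]; exact Real.sq_sqrt (by positivity)
  have h3 : Real.sqrt 3 ^ 2 = 3 := Real.sq_sqrt (by norm_num)
  have hα2 : α ^ 2 + 2 * α = 2 := by
    rw [hα]; linear_combination h3
  have hgu : g * g⁻¹ = 1 := mul_inv_cancel₀ hg'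
  funext i
  fin_cases i <;>
    simp only [Fs, Matrix.cons_val_zero, Matrix.cons_val_one, Matrix.head_cons,
      Fin.mk_zero, Fin.mk_one, Matrix.cons_val_succ, Fin.reduceFinMk, Matrix.cons_val_two, Matrix.tail_cons]
  · linear_combination
      (vn * α * g⁻¹ / 2 + vn * α ^ 2 * g⁻¹ / 2 - c * α ^ 2 * g⁻¹ / 2) * hc2 +
      (h * vn / 2 - h * c / 2) * hα2 +
      (h * vn * α / 2 + h * vn * α ^ 2 / 2 - h * c * α ^ 2 / 2) * hgu
  · linear_combination
      (vn * v1 * α * g⁻¹ / 4 + vn * v1 * α ^ 2 * g⁻¹ / 4 + vn ^ 2 * n1 * g⁻¹ / 2 -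
        c * v1 * α ^ 2 * g⁻¹ / 4 - c * vn * n1 * g⁻¹ / 2 - c * vn * n1 * α * g⁻¹ / 2 +
        c ^ 2 * n1 * α * g⁻¹ / 2 + h * n1 * α / 2) * hc2 +
      (h * vn * v1 / 4 - h * c * v1 / 4) * hα2 +
      (h * vn * v1 * α / 4 + h * vn * v1 * α ^ 2 / 4 + h * vn ^ 2 * n1 / 2 -
        h * c * v1 * α ^ 2 / 4 - h * c * vn * n1 / 2 - h * c * vn * n1 * α / 2 +
        h * c ^ 2 * n1 * α / 2) * hgu
  · linear_combination
      (vn * v2 * α * g⁻¹ / 4 + vn * v2 * α ^ 2 * g⁻¹ / 4 + vn ^ 2 * n2 * g⁻¹ / 2 -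
        c * v2 * α ^ 2 * g⁻¹ / 4 - c * vn * n2 * g⁻¹ / 2 - c * vn * n2 * α * g⁻¹ / 2 +
        c ^ 2 * n2 * α * g⁻¹ / 2 + h * n2 * α / 2) * hc2 +
      (h * vn * v2 / 4 - h * c * v2 / 4) * hα2 +
      (h * vn * v2 * α / 4 + h * vn * v2 * α ^ 2 / 4 + h * vn ^ 2 * n2 / 2 -
        h * c * v2 * α ^ 2 / 4 - h * c * vn * n2 / 2 - h * c * vn * n2 * α / 2 +
        h * c ^ 2 * n2 * α / 2) * hgu
end

section
/- Consistency of the subcritical inflow flux. Let g > 0, h > 0, v1, v2 ∈ ℝ with unit normal n1² + n2² = 1, c = √(g h), v_n = n1 v1 + n2 v2, v_τ = −n2 v1 + n1 v2, and assume −c < v_n < 0. Let α = −1 + √3 (so α² + 2α = 2). When the external state equals the internal state (so c_ext = c, v_n^ext = v_n, v_τ^ext = v_τ, λ̄₁ = |v_n| + c, λ̄₂ = |v_n|, h̄ = h), the subcritical inflow flux F* with components F*₁ = (α/2) h v_n + (1−α) h c + (α/(2g)) c v_n² − (α/(2g)) (|v_n| + c) c (α c − v_n); F*₂ = (α/4 −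 1/2) h v1 v_n + ((1−α)/2) h c v1 + (α/(4g)) c v1 v_n² + (1−α)(g h²/2) n1 + (h v_n/2)((1+α)c + v_n) n1 − (1/(4g)) (|v_n| + c) c (α c − v_n)(α v1 − 2 c n1) + |v_n| h v_τ n2; F*₃ = the same with (v1, n1) replaced by (v2, n2) in all terms except the last, and last term −|v_n| h v_τ n1; equals the normal flux: F* = (h v_n, h v1 v_n + (g/2) h² n1, h v2 v_n + (g/2) h² n2). -/
open Matrix Real

/-- Consistency of the subcritical inflow flux: when the external state equals the
internal state, the subcritical inflow boundary flux equals the normal flux. -/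
theorem swe_subcritical_inflow_consistent (g h v1 v2 n1 n2 c vn vτ α : ℝ)
    (hg : 0 < g) (hh : 0 < h) (hn : n1 ^ 2 + n2 ^ 2 = 1)
    (hc : c = Real.sqrt (g * h)) (hvn : vn = n1 * v1 + n2 * v2)
    (hvτ : vτ = -n2 * v1 + n1 * v2)
    (hsub : -c < vn ∧ vn < 0) (hα : α = -1 + Real.sqrt 3) :
    let Fs : Fin 3 → ℝ :=
      ![α / 2 * h * vn + (1 - α) * h * c + α / (2 * g) * c * vn ^ 2 -
          α / (2 * g) * (|vn| + c) * c * (α * c - vn),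
        (α / 4 - 1 / 2) * h * v1 * vn + (1 - α) / 2 * h * c * v1 +
          α / (4 * g) * c * v1 * vn ^ 2 + (1 - α) * (g * h ^ 2 / 2) * n1 +
          h * vn / 2 * ((1 + α) * c + vn) * n1 -
          1 / (4 * g) * (|vn| + c) * c * (α * c - vn) * (α * v1 - 2 * c * n1) +
          |vn| * h * vτ * n2,
        (α / 4 - 1 / 2) * h * v2 * vn + (1 - α) / 2 * h * c * v2 +
          α / (4 * g) * c * v2 * vn ^ 2 + (1 - α) * (g * h ^ 2 / 2) * n2 +
          h * vn / 2 * ((1 + α) * c + vn) * n2 -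
          1 / (4 * g) * (|vn| + c) * c * (α * c - vn) * (α * v2 - 2 * c * n2) -
          |vn| * h * vτ * n1]
    Fs = ![h * vn, h * v1 * vn + g / 2 * h ^ 2 * n1,
           h * v2 * vn + g / 2 * h ^ 2 * n2] := by
  have habs : |vn| = -vn := abs_of_neg hsub.2
  have hc2 : c ^ 2 = g * h := by
    rw [hc, Real.sq_sqrt (by positivity)]
  have ha2 : α ^ 2 + 2 * α = 2 := by
    have h3 : Real.sqrt 3 ^ 2 = 3 := Real.sq_sqrt (by norm_num)
    nlinarith [h3]
  have hgi : g * g⁻¹ = 1 := mul_inv_cancel₀ hg.ne'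
  have hv1 : v1 = n1 * vn - n2 * vτ := by
    linear_combination (-n1) * hvn + n2 * hvτ + (-v1) * hn
  have hv2 : v2 = n2 * vn + n1 * vτ := by
    linear_combination (-n2) * hvn + (-n1) * hvτ + (-v2) * hn
  have e1 : α / 2 * h * vn + (1 - α) * h * c + α / (2 * g) * c * vn ^ 2 -
      α / (2 * g) * (|vn| + c) * c * (α * c - vn) = h * vn := by
    linear_combination ((1/2)*c*vn*α*g⁻¹ + (-1/2)*c^2*α^2*g⁻¹) * habs + ((1/2)*h*vn*α + (1/2)*h*vn*α^2 + (-1/2)*h*c*α^2) * hgi + ((1/2)*vn*α*g⁻¹ + (1/2)*vn*α^2*g⁻¹ + (-1/2)*c*α^2*g⁻¹) * hc2 + ((1/2)*h*vn + (-1/2)*h*c) * ha2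
  have e2 : (α / 4 - 1 / 2) * h * v1 * vn + (1 - α) / 2 * h * c * v1 +
      α / (4 * g) * c * v1 * vn ^ 2 + (1 - α) * (g * h ^ 2 / 2) * n1 +
      h * vn / 2 * ((1 + α) * c + vn) * n1 -
      1 / (4 * g) * (|vn| + c) * c * (α * c - vn) * (α * v1 - 2 * c * n1) +
      |vn| * h * vτ * n2 = h * v1 * vn + g / 2 * h ^ 2 * n1 := by
    linear_combination ((-1/2)*n1*c^2*vn*g⁻¹ + (1/2)*n1*c^3*α*g⁻¹ + (1/4)*v1*c*vn*α*g⁻¹ + (-1/4)*v1*c^2*α^2*g⁻¹ + h*n2*vτ) * habs + ((1/4)*c^2*vn*α*g⁻¹ + (1/4)*c^2*vn*α^2*g⁻¹ + (-1/4)*c^3*α^2*g⁻¹ + (-3/2)*h*vn + (1/4)*h*vn*α + (1/2)*h*c + (-1/2)*h*c*α) * hv1 + ((-1/4)*h*n2*vn*vτ*α + (-1/4)*h*n2*vn*vτ*α^2 + (1/4)*h*n2*c*vτ*α^2 + (1/2)*h*n1*vn^2 + (1/4)*h*n1*vn^2*α + (1/4)*h*n1*vn^2*α^2 + (-1/2)*h*n1*c*vn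 + (-1/2)*h*n1*c*vn*α + (-1/4)*h*n1*c*vn*α^2 + (1/2)*h*n1*c^2*α) * hgi + ((-1/4)*n2*vn*vτ*α*g⁻¹ + (-1/4)*n2*vn*vτ*α^2*g⁻¹ + (1/4)*n2*c*vτ*α^2*g⁻¹ + (1/2)*n1*vn^2*g⁻¹ + (1/4)*n1*vn^2*α*g⁻¹ + (1/4)*n1*vn^2*α^2*g⁻¹ + (-1/2)*n1*c*vn*g⁻¹ + (-1/2)*n1*c*vn*α*g⁻¹ + (-1/4)*n1*c*vn*α^2*g⁻¹ + (1/2)*n1*c^2*α*g⁻¹ + (1/2)*h*n1*α) * hc2 + ((-1/4)*h*n2*vn*vτ + (1/4)*h*n2*c*vτ + (1/4)*h*n1*vn^2 + (-1/4)*h*n1*c*vn) * ha2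
  have e3 : (α / 4 - 1 / 2) * h * v2 * vn + (1 - α) / 2 * h * c * v2 +
      α / (4 * g) * c * v2 * vn ^ 2 + (1 - α) * (g * h ^ 2 / 2) * n2 +
      h * vn / 2 * ((1 + α) * c + vn) * n2 -
      1 / (4 * g) * (|vn| + c) * c * (α * c - vn) * (α * v2 - 2 * c * n2) -
      |vn| * h * vτ * n1 = h * v2 * vn + g / 2 * h ^ 2 * n2 := by
    linear_combination ((-1/2)*n2*c^2*vn*g⁻¹ + (1/2)*n2*c^3*α*g⁻¹ + (1/4)*v2*c*vn*α*g⁻¹ + (-1/4)*v2*c^2*α^2*g⁻¹ + (-1)*h*n1*vτ) * habs + ((1/4)*c^2*vn*α*g⁻¹ + (1/4)*c^2*vn*α^2*g⁻¹ + (-1/4)*c^3*α^2*g⁻¹ + (-3/2)*h*vn + (1/4)*h*vn*α + (1/2)*h*c + (-1/2)*h*c*α) * hv2 + ((1/2)*h*n2*vn^2 + (1/4)*h*n2*vn^2*α + (1/4)*h*n2*vn^2*α^2 + (-1/2)*h*n2*c*vn + (-1/2)*h*n2*c*vn*α + (-1/4)*h*n2*c*vn*α^2 + (1/2)*h*n2*c^2*α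 + (1/4)*h*n1*vn*vτ*α + (1/4)*h*n1*vn*vτ*α^2 + (-1/4)*h*n1*c*vτ*α^2) * hgi + ((1/2)*n2*vn^2*g⁻¹ + (1/4)*n2*vn^2*α*g⁻¹ + (1/4)*n2*vn^2*α^2*g⁻¹ + (-1/2)*n2*c*vn*g⁻¹ + (-1/2)*n2*c*vn*α*g⁻¹ + (-1/4)*n2*c*vn*α^2*g⁻¹ + (1/2)*n2*c^2*α*g⁻¹ + (1/4)*n1*vn*vτ*α*g⁻¹ + (1/4)*n1*vn*vτ*α^2*g⁻¹ + (-1/4)*n1*c*vτ*α^2*g⁻¹ + (1/2)*h*n2*α) * hc2 + ((1/4)*h*n2*vn^2 + (-1/4)*h*n2*c*vn + (1/4)*h*n1*vn*vτ + (-1/4)*h*n1*c*vτ) * ha2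
  intro Fs
  show (![α / 2 * h * vn + (1 - α) * h * c + α / (2 * g) * c * vn ^ 2 -
          α / (2 * g) * (|vn| + c) * c * (α * c - vn), (α / 4 - 1 / 2) * h * v1 * vn + (1 - α) / 2 * h * c * v1 +
          α / (4 * g) * c * v1 * vn ^ 2 + (1 - α) * (g * h ^ 2 / 2) * n1 +
          h * vn / 2 * ((1 + α) * c + vn) * n1 -
          1 / (4 * g) * (|vn| + c) * c * (α * c - vn) * (α * v1 - 2 * c * n1) +
          |vn| * h * vτ * n2, (α / 4 - 1 / 2) * h * v2 * vn + (1 - α) / 2 * h * c * v2 +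
          α / (4 * g) * c * v2 * vn ^ 2 + (1 - α) * (g * h ^ 2 / 2) * n2 +
          h * vn / 2 * ((1 + α) * c + vn) * n2 -
          1 / (4 * g) * (|vn| + c) * c * (α * c - vn) * (α * v2 - 2 * c * n2) -
          |vn| * h * vτ * n1] : Fin 3 → ℝ) =
    ![h * vn, h * v1 * vn + g / 2 * h ^ 2 * n1, h * v2 * vn + g / 2 * h ^ 2 * n2]
  rw [e1, e2, e3]
end

section
/- Consistency of the supercritical inflow flux. Let g > 0, h > 0, v1, v2 ∈ ℝ with unit normal n1² + n2² = 1, c = √(g h), v_n = n1 v1 + n2 v2, v_τ = −n2 v1 + n1 v2, and assume v_n < −c. Let α = −1 + √3 (so α² + 2α = 2). When the external state equals the internal state (so c_ext = c, v_n^ext = v_n, v_τ^ext = v_τ, λ̄₁ = |v_n| + c, λ̄₂ = |v_n|, λ̄₃ = |v_n| − c, h̄ = h), the supercritical inflow flux F* with components F*₁ = (α − 1) h v_n − (α/(2g)) (|v_n| + c) c (α c − v_n) − (α/(2g)) (|v_n| − c) c (α c + v_n); F*₂ = (α/2 − 1) h v1 v_n + (1 − 2α)(g h²/2) n1 − (1/(4g))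 (|v_n| + c) c (α c − v_n)(α v1 − 2 c n1) − (1/(4g)) (|v_n| − c) c (α c + v_n)(α v1 + 2 c n1) + |v_n| h v_τ n2; F*₃ = the same with (v1, n1) replaced by (v2, n2) in all terms except the last, and last term −|v_n| h v_τ n1; equals the normal flux: F* = (h v_n, h v1 v_n + (g/2) h² n1, h v2 v_n + (g/2) h² n2). -/
open Matrix Real

/-- Consistency of the supercritical inflow flux: when the external state equals the
internal state, the supercritical inflow boundary flux equals the normal flux. -/
theorem swe_supercritical_inflow_consistent (g h v1 v2 n1 n2 c vn vτ α : ℝ)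
    (hg : 0 < g) (hh : 0 < h) (hn : n1 ^ 2 + n2 ^ 2 = 1)
    (hc : c = Real.sqrt (g * h)) (hvn : vn = n1 * v1 + n2 * v2)
    (hvτ : vτ = -n2 * v1 + n1 * v2)
    (hsup : vn < -c) (hα : α = -1 + Real.sqrt 3) :
    let Fs : Fin 3 → ℝ :=
      ![(α - 1) * h * vn - α / (2 * g) * (|vn| + c) * c * (α * c - vn) -
          α / (2 * g) * (|vn| - c) * c * (α * c + vn),
        (α / 2 - 1) * h * v1 * vn + (1 - 2 * α) * (g * h ^ 2 / 2) * n1 -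
          1 / (4 * g) * (|vn| + c) * c * (α * c - vn) * (α * v1 - 2 * c * n1) -
          1 / (4 * g) * (|vn| - c) * c * (α * c + vn) * (α * v1 + 2 * c * n1) +
          |vn| * h * vτ * n2,
        (α / 2 - 1) * h * v2 * vn + (1 - 2 * α) * (g * h ^ 2 / 2) * n2 -
          1 / (4 * g) * (|vn| + c) * c * (α * c - vn) * (α * v2 - 2 * c * n2) -
          1 / (4 * g) * (|vn| - c) * c * (α * c + vn) * (α * v2 + 2 * c * n2) -
          |vn| * h * vτ * n1]
    Fs = ![h * vn, h * v1 * vn + g / 2 * h ^ 2 * n1,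
           h * v2 * vn + g / 2 * h ^ 2 * n2] := by
  have hc0 : 0 ≤ c := hc ▸ Real.sqrt_nonneg _
  have hc2 : c ^ 2 = g * h := by
    rw [hc, Real.sq_sqrt (by positivity)]
  have habs : |vn| = -vn := abs_of_neg (lt_of_lt_of_le hsup (by linarith))
  have hs : α ^ 2 + 2 * α = 2 := by
    have h3 : Real.sqrt 3 ^ 2 = 3 := Real.sq_sqrt (by norm_num)
    rw [hα]; ring_nf; nlinarith [h3]
  have hgi : g * g⁻¹ = 1 := mul_inv_cancel₀ (ne_of_gt hg)
  subst hvn hvτ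
  intro Fs
  funext i
  fin_cases i <;>
    simp only [Fs, Fin.zero_eta, Fin.mk_one, Fin.reduceFinMk, Matrix.cons_val_zero,
      Matrix.cons_val_one, Matrix.cons_val_two, Matrix.head_cons, Matrix.tail_cons] <;>
    rw [habs]
  · linear_combination
      (g⁻¹*v2*n2*α + g⁻¹*v2*n2*α^2 + g⁻¹*v1*n1*α + g⁻¹*v1*n1*α^2) * hc2 +
      (h*v2*n2 + h*v1*n1) * hs +
      (h*v2*n2*α + h*v2*n2*α^2 + h*v1*n1*α + h*v1*n1*α^2) * hgi
  · linear_combination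
      (h*n1*α + g⁻¹*n1*c^2*α + g⁻¹*v2^2*n1*n2^2 + (1/2)*g⁻¹*v1*v2*n2*α +
        (1/2)*g⁻¹*v1*v2*n2*α^2 + 2*g⁻¹*v1*v2*n1^2*n2 + (1/2)*g⁻¹*v1^2*n1*α +
        (1/2)*g⁻¹*v1^2*n1*α^2 + g⁻¹*v1^2*n1^3) * hc2 +
      ((1/2)*h*v1*v2*n2 + (1/2)*h*v1^2*n1) * hs +
      (h*v1*v2*n2 + h*v1^2*n1) * hn +
      (h*n1*c^2*α + h*v2^2*n1*n2^2 + (1/2)*h*v1*v2*n2*α + (1/2)*h*v1*v2*n2*α^2 +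
        2*h*v1*v2*n1^2*n2 + (1/2)*h*v1^2*n1*α + (1/2)*h*v1^2*n1*α^2 + h*v1^2*n1^3) * hgi
  · linear_combination
      (h*n2*α + g⁻¹*n2*c^2*α + (1/2)*g⁻¹*v2^2*n2*α + (1/2)*g⁻¹*v2^2*n2*α^2 +
        g⁻¹*v2^2*n2^3 + (1/2)*g⁻¹*v1*v2*n1*α + (1/2)*g⁻¹*v1*v2*n1*α^2 +
        2*g⁻¹*v1*v2*n1*n2^2 + g⁻¹*v1^2*n1^2*n2) * hc2 +
      ((1/2)*h*v2^2*n2 + (1/2)*h*v1*v2*n1) * hs +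
      (h*v2^2*n2 + h*v1*v2*n1) * hn +
      (h*n2*c^2*α + (1/2)*h*v2^2*n2*α + (1/2)*h*v2^2*n2*α^2 + h*v2^2*n2^3 +
        (1/2)*h*v1*v2*n1*α + (1/2)*h*v1*v2*n1*α^2 + 2*h*v1*v2*n1*n2^2 +
        h*v1^2*n1^2*n2) * hgi
end

section
/- Entropy bound for the subcritical outflow flux. Let g > 0, let the interior state satisfy h > 0 and 0 < v_n < c, and let the exterior state satisfy h_ext > 0 and 0 < v_n^ext < c_ext, with α = −1 + √3. Let F* be the subcritical outflow flux with components F*₁ = (α/2) h v_n + (1−α) h c + (α/(2g)) c v_n² − (α/(2g)) λ̄₁ c_ext (α c_ext − v_n^ext); F*₂ = (α/4 + 1/2) h v1 v_n + ((1−α)/2) h c v1 + (α/(4g)) c v1 v_n² + (1−α)(g h²/2) n1 + (h v_n/2)((1+α)c − v_n) n1 − (1/(4g)) λ̄₁ c_ext (α c_ext − v_n^ext)(α v1 − 2 c n1); F*₃ = the same with (v1, n1) replaced by (v2, n2); where λ̄₁ = √((c − v_n)(c_ext − v_n^ext)). Then the boundary term is bounded below solely by the external data: F_n^ent + Vᵀ(F*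 − F_n) ≥ −(c_ext²/(4g))·(c_ext − v_n^ext)·(α c_ext − v_n^ext)². -/
open Matrix Real

set_option maxHeartbeats 2000000 in
/-- Entropy bound for the subcritical outflow flux: the boundary term
`F_n^ent + Vᵀ(F* − F_n)` is bounded below solely by external data. -/
theorem swe_subcritical_outflow_entropy_bound
    (g h v1 v2 n1 n2 hext v1e v2e c vn cext vne : ℝ)
    (hg : 0 < g) (hh : 0 < h) (hhe : 0 < hext) (hn : n1 ^ 2 + n2 ^ 2 = 1)
    (hc : c = Real.sqrt (g * h)) (hvn : vn = n1 * v1 + n2 * v2)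
    (hce : cext = Real.sqrt (g * hext)) (hvne : vne = n1 * v1e + n2 * v2e)
    (hsub : 0 < vn ∧ vn < c) (hsube : 0 < vne ∧ vne < cext) :
    ∀ α : ℝ, α = -1 + Real.sqrt 3 →
    let lam1 : ℝ := Real.sqrt ((c - vn) * (cext - vne))
    let V : Fin 3 → ℝ := ![g * h - (v1 ^ 2 + v2 ^ 2) / 2, v1, v2]
    let Fn : Fin 3 → ℝ :=
      ![h * vn, h * v1 * vn + g / 2 * h ^ 2 * n1, h * v2 * vn + g / 2 * h ^ 2 * n2]
    let Fent : ℝ := h * vn / 2 * (v1 ^ 2 + v2 ^ 2) + g * h ^ 2 * vn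
    let Fs : Fin 3 → ℝ :=
      ![α / 2 * h * vn + (1 - α) * h * c + α / (2 * g) * c * vn ^ 2 -
          α / (2 * g) * lam1 * cext * (α * cext - vne),
        (α / 4 + 1 / 2) * h * v1 * vn + (1 - α) / 2 * h * c * v1 +
          α / (4 * g) * c * v1 * vn ^ 2 + (1 - α) * (g * h ^ 2 / 2) * n1 +
          h * vn / 2 * ((1 + α) * c - vn) * n1 -
          1 / (4 * g) * lam1 * cext * (α * cext - vne) * (α * v1 - 2 * c * n1),
        (α / 4 + 1 / 2) * h * v2 * vn + (1 - α) / 2 * h * c * v2 +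
          α / (4 * g) * c * v2 * vn ^ 2 + (1 - α) * (g * h ^ 2 / 2) * n2 +
          h * vn / 2 * ((1 + α) * c - vn) * n2 -
          1 / (4 * g) * lam1 * cext * (α * cext - vne) * (α * v2 - 2 * c * n2)]
    Fent + V ⬝ᵥ (Fs - Fn) ≥
      -(cext ^ 2 / (4 * g) * (cext - vne) * (α * cext - vne) ^ 2) := by
  intro α hα
  dsimp only
  simp only [dotProduct, Fin.sum_univ_three, Pi.sub_apply, Matrix.cons_val_zero,
    Matrix.cons_val_one, Matrix.head_cons, Matrix.cons_val_two, Matrix.tail_cons]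
  obtain ⟨hvn0, hvnc⟩ := hsub
  obtain ⟨hvne0, hvnec⟩ := hsube
  have hc0 : 0 < c := by rw [hc]; exact Real.sqrt_pos.2 (by positivity)
  have hce0 : 0 < cext := by rw [hce]; exact Real.sqrt_pos.2 (by positivity)
  have hc2 : c ^ 2 = g * h := by rw [hc]; exact Real.sq_sqrt (by positivity)
  have hh2 : h = c ^ 2 * g⁻¹ := by rw [hc2]; field_simp
  have hu : g * g⁻¹ = 1 := mul_inv_cancel₀ hg.ne'
  set p := Real.sqrt (c - vn) with hp
  set q := Real.sqrt (cext - vne) with hq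
  have hp2 : p ^ 2 = c - vn := Real.sq_sqrt (by linarith)
  have hq2 : q ^ 2 = cext - vne := Real.sq_sqrt (by linarith)
  have hp0 : 0 ≤ p := Real.sqrt_nonneg _
  have hq0 : 0 ≤ q := Real.sqrt_nonneg _
  have hpq : Real.sqrt ((c - vn) * (cext - vne)) = p * q :=
    Real.sqrt_mul (by linarith) _
  have h3 : Real.sqrt 3 ^ 2 = 3 := Real.sq_sqrt (by norm_num)
  have h30 : 0 ≤ Real.sqrt 3 := Real.sqrt_nonneg 3
  have ha2 : α ^ 2 = 2 - 2 * α := by rw [hα]; linear_combination h3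
  have hα1 : α ≤ 1 := by rw [hα]; nlinarith [h3, h30]
  have hα0 : 0 ≤ α := by rw [hα]; nlinarith [h3, h30]
  set SUM : ℝ := (p * c * (α * c - vn) - q * cext * (α * cext - vne)) ^ 2 +
      c ^ 2 * (2 * (1 - α) * c ^ 3 + 2 * c ^ 2 * vn + (1 + 2 * α) * c * vn ^ 2 + vn ^ 3) +
      2 * c ^ 2 * vn * (n1 * v2 - n2 * v1) ^ 2 with hSUM
  have key : h * vn / 2 * (v1 ^ 2 + v2 ^ 2) + g * h ^ 2 * vn +
      (g * h - (v1 ^ 2 + v2 ^ 2) / 2) *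
        (α / 2 * h * vn + (1 - α) * h * c + α / (2 * g) * c * vn ^ 2 -
          α / (2 * g) * (p * q) * cext * (α * cext - vne) - h * vn) +
      v1 * ((α / 4 + 1 / 2) * h * v1 * vn + (1 - α) / 2 * h * c * v1 +
          α / (4 * g) * c * v1 * vn ^ 2 + (1 - α) * (g * h ^ 2 / 2) * n1 +
          h * vn / 2 * ((1 + α) * c - vn) * n1 -
          1 / (4 * g) * (p * q) * cext * (α * cext - vne) * (α * v1 - 2 * c * n1) -
          (h * v1 * vn + g / 2 * h ^ 2 * n1)) +
      v2 * ((α / 4 + 1 / 2) * h * v2 * vn + (1 - α) / 2 * h * c * v2 +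
          α / (4 * g) * c * v2 * vn ^ 2 + (1 - α) * (g * h ^ 2 / 2) * n2 +
          h * vn / 2 * ((1 + α) * c - vn) * n2 -
          1 / (4 * g) * (p * q) * cext * (α * cext - vne) * (α * v2 - 2 * c * n2) -
          (h * v2 * vn + g / 2 * h ^ 2 * n2)) =
      -(cext ^ 2 / (4 * g) * (cext - vne) * (α * cext - vne) ^ 2) + g⁻¹ / 4 * SUM := by
    rw [hSUM]
    linear_combination ((1/2)*vn*v2^2 + (1/2)*vn*v1^2 + (-1/2)*vn^2*v2*n2 + (-1/2)*vn^2*v1*n1 + (1/2)*c*vn*v2*n2 + (1/2)*c*vn*v2*n2*α + (1/2)*c*vn*v1*n1 + (1/2)*c*vn*v1*n1*α + (-1/2)*g*h*v2*n2*α + (-1/2)*g*h*v1*n1*α + (1/2)*g*h*vn*α + 1*g*h*c + (-1)*g*h*c*α + (1/2)*g*g⁻¹*cext*vne*α*p*q + (-1/2)*g*g⁻¹*cext^2*α^2*p*q + (1/2)*g*g⁻¹*c*vn^2*α + (-1/2)*g*g⁻¹*c^2*v2*n2*α + (-1/2)*g*g⁻¹*c^2*v1*n1*α + (1/2)*g*g⁻¹*c^2*vn*α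 + 1*g*g⁻¹*c^3 + (-1)*g*g⁻¹*c^3*α) * hh2 + ((1/2)*g⁻¹*c*cext*vne*p*q + (-1/2)*g⁻¹*c*cext^2*α*p*q + (-1/4)*g⁻¹*c^2*v2*n2*p^2 + (1/2)*g⁻¹*c^2*v2^2 + (-1/2)*g⁻¹*c^2*v2^2*n2^2 + (-1/2)*g⁻¹*c^2*v2^2*n1^2 + (-1/4)*g⁻¹*c^2*v1*n1*p^2 + (1/2)*g⁻¹*c^2*v1^2 + (-1/2)*g⁻¹*c^2*v1^2*n2^2 + (-1/2)*g⁻¹*c^2*v1^2*n1^2 + (-1/4)*g⁻¹*c^2*vn*p^2 + (-3/4)*g⁻¹*c^2*vn*v2*n2 + (-3/4)*g⁻¹*c^2*vn*v1*n1 + (-1/4)*g⁻¹*c^2*vn^2 + (1/2)*g⁻¹*c^3*α*p^2 + (1/4)*g⁻¹*c^3*v2*n2 + (-1/2)*g⁻¹*c^3*v2*n2*α + (1/4)*g⁻¹*c^3*v1*n1 + (-1/2)*g⁻¹*c^3*v1*n1*α + (-1/4)*g⁻¹*c^3*vn + (-1/2)*g⁻¹*c^3*vn*α + (-1/2)*g⁻¹*c^4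 + (1/4)*g⁻¹*c^4*α^2 + (1/2)*g*g⁻¹^2*c^3*v2*n2*α + (1/2)*g*g⁻¹^2*c^3*v1*n1*α + (1/2)*g*g⁻¹^2*c^3*vn*α + (1/2)*g*g⁻¹^2*c^4*α) * hvn + ((-1/4)*g⁻¹*c^2*v2^2*n2^2 + (-1/2)*g⁻¹*c^2*v1*v2*n1*n2 + (-1/4)*g⁻¹*c^2*v1^2*n1^2 + (1/2)*g⁻¹*c^3*v2*n2*α + (1/2)*g⁻¹*c^3*v1*n1*α + (-1/4)*g⁻¹*c^4*α^2) * hp2 + ((-1/4)*g⁻¹*cext^2*vne^2 + (1/2)*g⁻¹*cext^3*vne*α + (-1/4)*g⁻¹*cext^4*α^2) * hq2 + ((-1/2)*g⁻¹*c^2*v2^3*n2 + (-1/2)*g⁻¹*c^2*v1*v2^2*n1 + (-1/2)*g⁻¹*c^2*v1^2*v2*n2 + (-1/2)*g⁻¹*c^2*v1^3*n1 + (-1/2)*g⁻¹*c^3*v2^2*α + (1/2)*g*g⁻¹^2*c^3*v2^2*α) * hn + ((1/2)*g⁻¹*c^2*cext^2*p*q + (1/4)*g⁻¹*c^4*v2*n2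 + (1/4)*g⁻¹*c^4*v1*n1 + (-1/4)*g⁻¹*c^5 + (-1/2)*g*g⁻¹^2*c^2*cext^2*p*q) * ha2 + ((1/2)*g⁻¹*c^2*cext*vne*α*p*q + (-1)*g⁻¹*c^2*cext^2*p*q + 1*g⁻¹*c^2*cext^2*α*p*q + (1/2)*g⁻¹*c^3*v2^2*α + (-1/2)*g⁻¹*c^3*v2^2*n1^2*α + 1*g⁻¹*c^3*v1*v2*n1*n2*α + (1/2)*g⁻¹*c^3*v1^2*n1^2*α + 1*g⁻¹*c^5 + (-1)*g⁻¹*c^5*α) * hu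
  have hS : 0 ≤ g⁻¹ / 4 * SUM := by
    have h1 : 0 ≤ (p * c * (α * c - vn) - q * cext * (α * cext - vne)) ^ 2 := sq_nonneg _
    have h2 : 0 ≤ c ^ 2 * (2 * (1 - α) * c ^ 3 + 2 * c ^ 2 * vn + (1 + 2 * α) * c * vn ^ 2 + vn ^ 3) := by
      have : 0 ≤ 2 * (1 - α) * c ^ 3 + 2 * c ^ 2 * vn + (1 + 2 * α) * c * vn ^ 2 + vn ^ 3 := by
        have e1 : 0 ≤ 2 * (1 - α) * c ^ 3 := by
          apply mul_nonneg (by linarith) (by positivity)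
        have e2 : 0 ≤ 2 * c ^ 2 * vn := by positivity
        have e3 : 0 ≤ (1 + 2 * α) * c * vn ^ 2 := by
          apply mul_nonneg (mul_nonneg (by linarith) hc0.le) (sq_nonneg _)
        have e4 : 0 ≤ vn ^ 3 := by positivity
        linarith
      positivity
    have h4 : 0 ≤ 2 * c ^ 2 * vn * (n1 * v2 - n2 * v1) ^ 2 := by positivity
    have h5 : 0 ≤ SUM := by rw [hSUM]; linarith
    positivity
  rw [hpq]
  linarith [key, hS]
end

section
/- Entropy bound for the subcritical inflow flux. Let g > 0, let the interior state satisfy h > 0 and −c < v_n < 0, and let the exterior state satisfy h_ext > 0 and −c_ext < v_n^ext < 0, with α = −1 + √3. Let F* be the subcritical inflow flux with components F*₁ = (α/2) h v_n + (1−α) h c + (α/(2g)) c v_n² − (α/(2g)) λ̄₁ c_ext (α c_ext − v_n^ext); F*₂ = (α/4 − 1/2) h v1 v_n + ((1−α)/2) h c v1 + (α/(4g)) c v1 v_n² + (1−α)(g h²/2) n1 + (h v_n/2)((1+α)c + v_n) n1 − (1/(4g)) λ̄₁ c_ext (α c_ext − v_n^ext)(α v1 − 2 c n1) + λ̄₂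 h̄ v_τ^ext n2; F*₃ = the same with (v1, n1) replaced by (v2, n2) in all terms except the last, and last term −λ̄₂ h̄ v_τ^ext n1; where λ̄₁ = √((|v_n| + c)(|v_n^ext| + c_ext)), λ̄₂ = √(|v_n|·|v_n^ext|), h̄ = √(h·h_ext). Then the boundary term is bounded below solely by the external data: F_n^ent + Vᵀ(F* − F_n) ≥ −(c_ext²/(4g))·[(c_ext + |v_n^ext|)·(α c_ext − v_n^ext)² + 2·|v_n^ext|·(v_τ^ext)²]. -/
open Matrix Real

/-- Entropy bound for the subcritical inflow flux: the boundary term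
`F_n^ent + Vᵀ(F* − F_n)` is bounded below solely by external data. -/
theorem swe_subcritical_inflow_entropy_bound
    (g h v1 v2 n1 n2 hext v1e v2e c vn vτ cext vne vte : ℝ)
    (hg : 0 < g) (hh : 0 < h) (hhe : 0 < hext) (hn : n1 ^ 2 + n2 ^ 2 = 1)
    (hc : c = Real.sqrt (g * h)) (hvn : vn = n1 * v1 + n2 * v2)
    (hvτ : vτ = -n2 * v1 + n1 * v2)
    (hce : cext = Real.sqrt (g * hext)) (hvne : vne = n1 * v1e + n2 * v2e)
    (hvte : vte = -n2 * v1e + n1 * v2e)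
    (hsub : -c < vn ∧ vn < 0) (hsube : -cext < vne ∧ vne < 0) :
    ∀ α : ℝ, α = -1 + Real.sqrt 3 →
    let lam1 : ℝ := Real.sqrt ((|vn| + c) * (|vne| + cext))
    let lam2 : ℝ := Real.sqrt (|vn| * |vne|)
    let hbar : ℝ := Real.sqrt (h * hext)
    let V : Fin 3 → ℝ := ![g * h - (v1 ^ 2 + v2 ^ 2) / 2, v1, v2]
    let Fn : Fin 3 → ℝ :=
      ![h * vn, h * v1 * vn + g / 2 * h ^ 2 * n1, h * v2 * vn + g / 2 * h ^ 2 * n2]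
    let Fent : ℝ := h * vn / 2 * (v1 ^ 2 + v2 ^ 2) + g * h ^ 2 * vn
    let Fs : Fin 3 → ℝ :=
      ![α / 2 * h * vn + (1 - α) * h * c + α / (2 * g) * c * vn ^ 2 -
          α / (2 * g) * lam1 * cext * (α * cext - vne),
        (α / 4 - 1 / 2) * h * v1 * vn + (1 - α) / 2 * h * c * v1 +
          α / (4 * g) * c * v1 * vn ^ 2 + (1 - α) * (g * h ^ 2 / 2) * n1 +
          h * vn / 2 * ((1 + α) * c + vn) * n1 -
          1 / (4 * g) * lam1 * cext * (α * cext - vne) * (α * v1 - 2 * c * n1) +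
          lam2 * hbar * vte * n2,
        (α / 4 - 1 / 2) * h * v2 * vn + (1 - α) / 2 * h * c * v2 +
          α / (4 * g) * c * v2 * vn ^ 2 + (1 - α) * (g * h ^ 2 / 2) * n2 +
          h * vn / 2 * ((1 + α) * c + vn) * n2 -
          1 / (4 * g) * lam1 * cext * (α * cext - vne) * (α * v2 - 2 * c * n2) -
          lam2 * hbar * vte * n1]
    Fent + V ⬝ᵥ (Fs - Fn) ≥
      -(cext ^ 2 / (4 * g) *
        ((cext + |vne|) * (α * cext - vne) ^ 2 + 2 * |vne| * vte ^ 2)) := by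
  obtain ⟨hvn1, hvn2⟩ := hsub
  obtain ⟨hve1, hve2⟩ := hsube
  intro α hα
  have hcpos : 0 < c := lt_of_le_of_lt (by linarith) (neg_lt_of_neg_lt hvn1)
  have hcepos : 0 < cext := lt_of_le_of_lt (by linarith) (neg_lt_of_neg_lt hve1)
  have hc2 : c ^ 2 = g * h := by rw [hc]; exact Real.sq_sqrt (by positivity)
  have hce2 : cext ^ 2 = g * hext := by rw [hce]; exact Real.sq_sqrt (by positivity)
  have habs1 : |vn| = -vn := abs_of_neg hvn2
  have habs2 : |vne| = -vne := abs_of_neg hve2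
  have hl1 : Real.sqrt ((-vn + c) * (-vne + cext)) =
      Real.sqrt (-vn + c) * Real.sqrt (-vne + cext) := Real.sqrt_mul (by linarith) _
  have hl2 : Real.sqrt (-vn * -vne) = Real.sqrt (-vn) * Real.sqrt (-vne) :=
    Real.sqrt_mul (by linarith) _
  have hcce : c * cext = g * Real.sqrt (h * hext) := by
    rw [hc, hce, ← Real.sqrt_mul (by positivity), show g * h * (g * hext) = g ^ 2 * (h * hext) by ring,
      Real.sqrt_mul (by positivity), Real.sqrt_sq hg.le]
  have hhbar : Real.sqrt (h * hext) = c * cext * g⁻¹ := by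
    rw [hcce]; field_simp
  simp only [habs1, habs2, hl1, hl2, hhbar, dotProduct, Fin.sum_univ_three,
    Pi.sub_apply, Matrix.cons_val_zero, Matrix.cons_val_one, Matrix.head_cons,
    Matrix.cons_val_two, Matrix.tail_cons]
  rw [ge_iff_le, ← sub_nonneg]
  set P := Real.sqrt (-vn + c) with hP
  set Q := Real.sqrt (-vne + cext) with hQ
  set R := Real.sqrt (-vn) with hR
  set S := Real.sqrt (-vne) with hS
  have hgi : g * g⁻¹ = 1 := mul_inv_cancel₀ hg.ne'
  have hh2 : h = c ^ 2 * g⁻¹ := by rw [hc2]; field_simp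
  have hhe2 : hext = cext ^ 2 * g⁻¹ := by rw [hce2]; field_simp
  have hp2 : P ^ 2 = -vn + c := by rw [hP]; exact Real.sq_sqrt (by linarith)
  have hq2 : Q ^ 2 = -vne + cext := by rw [hQ]; exact Real.sq_sqrt (by linarith)
  have hr2 : R ^ 2 = -vn := by rw [hR]; exact Real.sq_sqrt (by linarith)
  have hs2 : S ^ 2 = -vne := by rw [hS]; exact Real.sq_sqrt (by linarith)
  have hs3 : Real.sqrt 3 ^ 2 = 3 := Real.sq_sqrt (by norm_num)
  have hA : (0:ℝ) ≤ g⁻¹ / 2 * (R * c * vτ - S * cext * vte) ^ 2 :=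
    mul_nonneg (div_nonneg (inv_nonneg.2 hg.le) (by norm_num)) (sq_nonneg _)
  have hB : (0:ℝ) ≤ g⁻¹ / 4 * (P * (c * (α * c - vn)) - Q * (cext * (α * cext - vne))) ^ 2 :=
    mul_nonneg (div_nonneg (inv_nonneg.2 hg.le) (by norm_num)) (sq_nonneg _)
  have hC : (0:ℝ) ≤ g⁻¹ / 4 * ((c + vn) * (c ^ 2 * (α * c + vn) ^ 2)) :=
    mul_nonneg (div_nonneg (inv_nonneg.2 hg.le) (by norm_num))
      (mul_nonneg (by linarith) (by positivity))
  have key : h * vn / 2 * (v1 ^ 2 + v2 ^ 2) + g * h ^ 2 * vn +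
        ((g * h - (v1 ^ 2 + v2 ^ 2) / 2) *
              (α / 2 * h * vn + (1 - α) * h * c + α / (2 * g) * c * vn ^ 2 -
                  α / (2 * g) * (P * Q) * cext * (α * cext - vne) -
                h * vn) +
            v1 *
              ((α / 4 - 1 / 2) * h * v1 * vn + (1 - α) / 2 * h * c * v1 + α / (4 * g) * c * v1 * vn ^ 2 +
                        (1 - α) * (g * h ^ 2 / 2) * n1 +
                      h * vn / 2 * ((1 + α) * c + vn) * n1 -
                    1 / (4 * g) * (P * Q) * cext * (α * cext - vne) * (α * v1 - 2 * c * n1) +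
                  R * S * (c * cext * g⁻¹) * vte * n2 -
                (h * v1 * vn + g / 2 * h ^ 2 * n1)) +
          v2 *
            ((α / 4 - 1 / 2) * h * v2 * vn + (1 - α) / 2 * h * c * v2 + α / (4 * g) * c * v2 * vn ^ 2 +
                      (1 - α) * (g * h ^ 2 / 2) * n2 +
                    h * vn / 2 * ((1 + α) * c + vn) * n2 -
                  1 / (4 * g) * (P * Q) * cext * (α * cext - vne) * (α * v2 - 2 * c * n2) -
                R * S * (c * cext * g⁻¹) * vte * n1 -
              (h * v2 * vn + g / 2 * h ^ 2 * n2))) -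
      -(cext ^ 2 / (4 * g) * ((cext + -vne) * (α * cext - vne) ^ 2 + 2 * -vne * vte ^ 2)) =
      g⁻¹ / 2 * (R * c * vτ - S * cext * vte) ^ 2 +
      g⁻¹ / 4 * (P * (c * (α * c - vn)) - Q * (cext * (α * cext - vne))) ^ 2 +
      g⁻¹ / 4 * ((c + vn) * (c ^ 2 * (α * c + vn) ^ 2)) := by
    linear_combination ((1/2) * v2 * n2 * vn^2 + (-1/2) * v2^2 * vn + (1/2) * v1 * n1 * vn^2 + (-1/2) * v1^2 * vn + (1/2) * c * v2 * n2 * vn + (1/2) * c * v2 * n2 * vn * α + (1/2) * c * v1 * n1 * vn + (1/2) * c * v1 * n1 * vn * α + (1/2) * g * h * vn * α + (-1/2) * g * h * v2 * n2 * α + (-1/2) * g * h * v1 * n1 * α + 1 * g * h * c + (-1) * g * h * c * α + (1/2) * g * g⁻¹ * cext * vne * P * Q * α + (-1/2) * g * g⁻¹ * cext^2 * P * Q * α^2 + (1/2) * g * g⁻¹ * c * vn^2 * α + (1/2) * g * g⁻¹ * c^2 * vn * α + (-1/2) * g * g⁻¹ * c^2 * v2 * n2 * α + (-1/2) * g * g⁻¹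 * c^2 * v1 * n1 * α + 1 * g * g⁻¹ * c^3 + (-1) * g * g⁻¹ * c^3 * α) * hh2 +
      ((-1/4) * g⁻¹ * c^2 * vn^2 + (1/2) * g⁻¹ * c^3 * vn * α + (-1/4) * g⁻¹ * c^4 * α^2) * hp2 +
      ((-1/4) * g⁻¹ * cext^2 * vne^2 + (1/2) * g⁻¹ * cext^3 * vne * α + (-1/4) * g⁻¹ * cext^4 * α^2) * hq2 +
      ((-1/2) * g⁻¹ * c^2 * vτ^2) * hr2 +
      ((-1/2) * g⁻¹ * cext^2 * vte^2) * hs2 +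
      ((-1/2) * g⁻¹ * c * cext^2 * vn * P * Q + (1/2) * g⁻¹ * c * cext^2 * v2 * n2 * P * Q + (1/2) * g⁻¹ * c * cext^2 * v1 * n1 * P * Q + (-1/2) * g⁻¹ * c^2 * cext * vne * P * Q + (-1/2) * g⁻¹ * c^2 * cext^2 * P * Q + (1/2) * g⁻¹ * c^2 * cext^2 * P * Q * (Real.sqrt 3) + (1/2) * g⁻¹ * c^2 * cext^2 * P * Q * α + (-1) * g⁻¹ * c^3 * vn^2 + (1/2) * g⁻¹ * c^3 * v2 * n2 * vn + (1/2) * g⁻¹ * c^3 * v1 * n1 * vn + (1/2) * g⁻¹ * c^5 + (-1/2) * g⁻¹ * c^5 * (Real.sqrt 3) + (-1/2) * g⁻¹ * c^5 * α + (1/2) * g * g⁻¹^2 * c^2 * cext * vne * P * Q + (1/2) * g * g⁻¹^2 * c^2 * cext^2 * P * Q + (-1/2) * g * g⁻¹^2 * c^2 * cext^2 * P * Q * (Real.sqrt 3) + (-1/2) * g * g⁻¹^2 * c^2 * cext^2 * P * Q * α + (1/2) * g * g⁻¹^2 * c^3 * vn^2 + (1/2) * g * g⁻¹^2 * c^4 *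 vn + (-1/2) * g * g⁻¹^2 * c^4 * v2 * n2 + (-1/2) * g * g⁻¹^2 * c^4 * v1 * n1 + (-1) * g * g⁻¹^2 * c^5) * hα +
      ((1/2) * g⁻¹ * c^2 * cext^2 * P * Q + (-1/2) * g⁻¹ * c^5 + (-1/2) * g * g⁻¹^2 * c^2 * cext^2 * P * Q) * hs3 +
      ((1/2) * g⁻¹ * c * cext * vne * P * Q + (1/2) * g⁻¹ * c * cext^2 * P * Q + (-1/2) * g⁻¹ * c * cext^2 * P * Q * (Real.sqrt 3) + (1/2) * g⁻¹ * c^2 * vτ^2 + (1/2) * g⁻¹ * c^2 * v2 * n2 * vn + (-1/2) * g⁻¹ * c^2 * v2^2 + (1/2) * g⁻¹ * c^2 * v2^2 * n2^2 + (1/2) * g⁻¹ * c^2 * v1 * n1 * vn + 1 * g⁻¹ * c^2 * v1 * v2 * n1 * n2 + (-1/2) * g⁻¹ * c^2 * v1^2 + (1/2) * g⁻¹ * c^2 * v1^2 * n1^2 + (1/2) * g⁻¹ * c^3 * vn + (-1) * g⁻¹ * c^3 * vn * (Real.sqrt 3) + (1/2) * g⁻¹ * c^3 * v2 * n2 + (-1/2)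 * g⁻¹ * c^3 * v2 * n2 * (Real.sqrt 3) + (1/2) * g⁻¹ * c^3 * v1 * n1 + (-1/2) * g⁻¹ * c^3 * v1 * n1 * (Real.sqrt 3) + (-1/2) * g * g⁻¹^2 * c^3 * vn + (1/2) * g * g⁻¹^2 * c^3 * vn * (Real.sqrt 3) + (-1/2) * g * g⁻¹^2 * c^3 * v2 * n2 + (1/2) * g * g⁻¹^2 * c^3 * v2 * n2 * (Real.sqrt 3) + (-1/2) * g * g⁻¹^2 * c^3 * v1 * n1 + (1/2) * g * g⁻¹^2 * c^3 * v1 * n1 * (Real.sqrt 3) + (-1/2) * g * g⁻¹^2 * c^4 + (1/2) * g * g⁻¹^2 * c^4 * (Real.sqrt 3)) * hvn +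
      (1 * g⁻¹ * c * cext * vte * R * S + (1/2) * g⁻¹ * c^2 * v2 * n2 * vτ + (1/2) * g⁻¹ * c^2 * v2^2 * n1 * n2 + (1/2) * g⁻¹ * c^2 * v1 * n1 * vτ + (-1/2) * g⁻¹ * c^2 * v1 * v2 * n2^2 + (1/2) * g⁻¹ * c^2 * v1 * v2 * n1^2 + (-1/2) * g⁻¹ * c^2 * v1^2 * n1 * n2) * hvτ +
      ((1/2) * g⁻¹ * c^2 * cext * P * Q + (-1/2) * g⁻¹ * c^2 * cext * P * Q * (Real.sqrt 3) + (-1/2) * g * g⁻¹^2 * c^2 * cext * P * Q + (1/2) * g * g⁻¹^2 * c^2 * cext * P * Q * (Real.sqrt 3)) * hvne +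
      ((1/2) * g⁻¹ * c^2 * v2^3 * n2 + (1/2) * g⁻¹ * c^2 * v1 * v2^2 * n1 + (1/2) * g⁻¹ * c^2 * v1^2 * v2 * n2 + (1/2) * g⁻¹ * c^2 * v1^3 * n1 + (1/2) * g⁻¹ * c^3 * v2^2 + (-1/2) * g⁻¹ * c^3 * v2^2 * (Real.sqrt 3) + (-1/2) * g * g⁻¹^2 * c^3 * v2^2 + (1/2) * g * g⁻¹^2 * c^3 * v2^2 * (Real.sqrt 3)) * hn +
      ((-1/2) * g⁻¹ * c^2 * cext * v2e * n2 * P * Q + (1/2) * g⁻¹ * c^2 * cext * v2e * n2 * P * Q * (Real.sqrt 3) + (-1/2) * g⁻¹ * c^2 * cext * v1e * n1 * P * Q + (1/2) * g⁻¹ * c^2 * cext * v1e * n1 * P * Q * (Real.sqrt 3) + (-2) * g⁻¹ * c^2 * cext^2 * P * Q + 1 * g⁻¹ * c^2 * cext^2 * P * Q * (Real.sqrt 3) + (-1/2) * g⁻¹ * c^3 * v2^2 + (1/2) * g⁻¹ * c^3 * v2^2 * (Real.sqrt 3) + (1/2) * g⁻¹ * c^3 * v2^2 * n1^2 + (-1/2)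 * g⁻¹ * c^3 * v2^2 * n1^2 * (Real.sqrt 3) + (-1) * g⁻¹ * c^3 * v1 * v2 * n1 * n2 + 1 * g⁻¹ * c^3 * v1 * v2 * n1 * n2 * (Real.sqrt 3) + (-1/2) * g⁻¹ * c^3 * v1^2 * n1^2 + (1/2) * g⁻¹ * c^3 * v1^2 * n1^2 * (Real.sqrt 3) + 2 * g⁻¹ * c^5 + (-1) * g⁻¹ * c^5 * (Real.sqrt 3)) * hgi
  rw [key]
  exact add_nonneg (add_nonneg hA hB) hC
end

section
/- Entropy bound for the supercritical inflow flux. Let g > 0, let the interior state satisfy h > 0 and v_n < −c, and let the exterior state satisfy h_ext > 0 and v_n^ext < −c_ext, with α = −1 + √3. Let F* be the supercritical inflow flux with components F*₁ = (α − 1) h v_n − (α/(2g)) λ̄₁ c_ext (α c_ext − v_n^ext) − (α/(2g)) λ̄₃ c_ext (α c_ext + v_n^ext); F*₂ = (α/2 − 1) h v1 v_n + (1 − 2α)(g h²/2) n1 − (1/(4g)) λ̄₁ c_ext (α c_ext − v_n^ext)(α v1 − 2 c n1) − (1/(4g)) λ̄₃ c_ext (α c_ext + v_n^ext)(α v1 +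 2 c n1) + λ̄₂ h̄ v_τ^ext n2; F*₃ = the same with (v1, n1) replaced by (v2, n2) in all terms except the last, and last term −λ̄₂ h̄ v_τ^ext n1; where λ̄₁ = √((|v_n| + c)(|v_n^ext| + c_ext)), λ̄₂ = √(|v_n|·|v_n^ext|), λ̄₃ = √((|v_n| − c)(|v_n^ext| − c_ext)), h̄ = √(h·h_ext). Then the boundary term is bounded below solely by the external data: F_n^ent + Vᵀ(F* − F_n) ≥ −(c_ext²/(4g))·[(c_ext + |v_n^ext|)·(α c_ext − v_n^ext)² + 2·|v_n^ext|·(v_τ^ext)² + (|v_n^ext| − c_ext)·(α c_ext + v_n^ext)²]. -/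
open Matrix Real

/-- Entropy bound for the supercritical inflow flux: the boundary term
`F_n^ent + Vᵀ(F* − F_n)` is bounded below solely by external data. -/
theorem swe_supercritical_inflow_entropy_bound
    (g h v1 v2 n1 n2 hext v1e v2e c vn vτ cext vne vte : ℝ)
    (hg : 0 < g) (hh : 0 < h) (hhe : 0 < hext) (hn : n1 ^ 2 + n2 ^ 2 = 1)
    (hc : c = Real.sqrt (g * h)) (hvn : vn = n1 * v1 + n2 * v2)
    (hvτ : vτ = -n2 * v1 + n1 * v2)
    (hce : cext = Real.sqrt (g * hext)) (hvne : vne = n1 * v1e + n2 * v2e)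
    (hvte : vte = -n2 * v1e + n1 * v2e)
    (hsup : vn < -c) (hsupe : vne < -cext) :
    ∀ α : ℝ, α = -1 + Real.sqrt 3 →
    let lam1 : ℝ := Real.sqrt ((|vn| + c) * (|vne| + cext))
    let lam2 : ℝ := Real.sqrt (|vn| * |vne|)
    let lam3 : ℝ := Real.sqrt ((|vn| - c) * (|vne| - cext))
    let hbar : ℝ := Real.sqrt (h * hext)
    let V : Fin 3 → ℝ := ![g * h - (v1 ^ 2 + v2 ^ 2) / 2, v1, v2]
    let Fn : Fin 3 → ℝ :=
      ![h * vn, h * v1 * vn + g / 2 * h ^ 2 * n1, h * v2 * vn + g / 2 * h ^ 2 * n2]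
    let Fent : ℝ := h * vn / 2 * (v1 ^ 2 + v2 ^ 2) + g * h ^ 2 * vn
    let Fs : Fin 3 → ℝ :=
      ![(α - 1) * h * vn - α / (2 * g) * lam1 * cext * (α * cext - vne) -
          α / (2 * g) * lam3 * cext * (α * cext + vne),
        (α / 2 - 1) * h * v1 * vn + (1 - 2 * α) * (g * h ^ 2 / 2) * n1 -
          1 / (4 * g) * lam1 * cext * (α * cext - vne) * (α * v1 - 2 * c * n1) -
          1 / (4 * g) * lam3 * cext * (α * cext + vne) * (α * v1 + 2 * c * n1) +
          lam2 * hbar * vte * n2,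
        (α / 2 - 1) * h * v2 * vn + (1 - 2 * α) * (g * h ^ 2 / 2) * n2 -
          1 / (4 * g) * lam1 * cext * (α * cext - vne) * (α * v2 - 2 * c * n2) -
          1 / (4 * g) * lam3 * cext * (α * cext + vne) * (α * v2 + 2 * c * n2) -
          lam2 * hbar * vte * n1]
    Fent + V ⬝ᵥ (Fs - Fn) ≥
      -(cext ^ 2 / (4 * g) *
        ((cext + |vne|) * (α * cext - vne) ^ 2 + 2 * |vne| * vte ^ 2 +
          (|vne| - cext) * (α * cext + vne) ^ 2)) := by
  intro α hα
  dsimp only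
  simp only [dotProduct, Fin.sum_univ_three, Matrix.cons_val_zero, Matrix.cons_val_one,
    Matrix.head_cons, Matrix.cons_val_two, Matrix.tail_cons, Pi.sub_apply]
  have hg' : g ≠ 0 := ne_of_gt hg
  have hc0 : 0 < c := by rw [hc]; exact Real.sqrt_pos.mpr (mul_pos hg hh)
  have hce0 : 0 < cext := by rw [hce]; exact Real.sqrt_pos.mpr (mul_pos hg hhe)
  have hc2 : c ^ 2 = g * h := by rw [hc]; exact Real.sq_sqrt (mul_pos hg hh).le
  have hce2 : cext ^ 2 = g * hext := by rw [hce]; exact Real.sq_sqrt (mul_pos hg hhe).le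
  have hvn0 : vn < 0 := by linarith
  have hvne0 : vne < 0 := by linarith
  have habs : |vn| = -vn := abs_of_neg hvn0
  have habse : |vne| = -vne := abs_of_neg hvne0
  rw [habs, habse]
  have hl1 : Real.sqrt ((-vn + c) * (-vne + cext))
      = Real.sqrt (-vn + c) * Real.sqrt (-vne + cext) := Real.sqrt_mul (by linarith) _
  have hl2 : Real.sqrt (-vn * -vne) = Real.sqrt (-vn) * Real.sqrt (-vne) :=
    Real.sqrt_mul (by linarith) _
  have hl3 : Real.sqrt ((-vn - c) * (-vne - cext))
      = Real.sqrt (-vn - c) * Real.sqrt (-vne - cext) := Real.sqrt_mul (by linarith) _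
  rw [hl1, hl2, hl3]
  set s1 := Real.sqrt (-vn + c) with hs1d
  set t1 := Real.sqrt (-vne + cext) with ht1d
  set s2 := Real.sqrt (-vn) with hs2d
  set t2 := Real.sqrt (-vne) with ht2d
  set s3 := Real.sqrt (-vn - c) with hs3d
  set t3 := Real.sqrt (-vne - cext) with ht3d
  set b := Real.sqrt (h * hext) with hbd
  have hs1 : s1 ^ 2 = -vn + c := Real.sq_sqrt (by linarith)
  have ht1 : t1 ^ 2 = -vne + cext := Real.sq_sqrt (by linarith)
  have hs2 : s2 ^ 2 = -vn := Real.sq_sqrt (by linarith)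
  have ht2 : t2 ^ 2 = -vne := Real.sq_sqrt (by linarith)
  have hs3 : s3 ^ 2 = -vn - c := Real.sq_sqrt (by linarith)
  have ht3 : t3 ^ 2 = -vne - cext := Real.sq_sqrt (by linarith)
  have hB : b = c * cext * g⁻¹ := by
    rw [hbd, hc, hce, ← Real.sqrt_mul (mul_pos hg hh).le,
      show g * h * (g * hext) = g ^ 2 * (h * hext) by ring,
      Real.sqrt_mul (sq_nonneg g), Real.sqrt_sq hg.le]
    field_simp
  have hginv : g * g⁻¹ = 1 := mul_inv_cancel₀ hg'
  have hα2 : α ^ 2 = 2 - 2 * α := by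
    rw [hα]; linear_combination Real.sq_sqrt (by norm_num : (0:ℝ) ≤ 3)
  have hv1 : v1 = vn * n1 - vτ * n2 := by
    linear_combination (-n1) * hvn + n2 * hvτ - v1 * hn
  have hv2 : v2 = vn * n2 + vτ * n1 := by
    linear_combination (-n2) * hvn - n1 * hvτ - v2 * hn
  rw [hv1, hv2]
  rw [ge_iff_le, ← sub_nonneg]
  have h4 : (0:ℝ) < 4 * g := by linarith
  have hQ : 0 ≤ 1 / (4 * g) *
      ((c * s1 * (α * c - vn) - cext * t1 * (α * cext - vne)) ^ 2 +
       2 * (c * s2 * vτ - cext * t2 * vte) ^ 2 +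
       (c * s3 * (α * c + vn) - cext * t3 * (α * cext + vne)) ^ 2) :=
    mul_nonneg (le_of_lt (one_div_pos.mpr h4)) (by positivity)
  refine le_trans hQ (le_of_eq ?_)
  linear_combination (norm := ring1) -(((1/2)*h*vn*vτ^2 + (1/2)*h*vn^3 - (1/2)*h*cext^2*α^2*s3*t3 - (1/2)*h*cext^2*α^2*s1*t1 + h*c^2*vn + g*h*hext*s3*t3 + g*h*hext*s1*t1 - g*h*hext*α*s3*t3 - g*h*hext*α*s1*t1) * hginv + (h*vn - (1/2)*g⁻¹*vτ^2*s2^2 - (1/4)*g⁻¹*vn^2*s3^2 - (1/4)*g⁻¹*vn^2*s1^2 + (1/2)*g⁻¹*cext*vne*α*s3*t3 - (1/2)*g⁻¹*cext*vne*α*s1*t1 + (1/2)*g⁻¹*cext^2*α^2*s3*t3 + (1/2)*g⁻¹*cext^2*α^2*s1*t1 - (1/2)*g⁻¹*c*vn*α*s3^2 + (1/2)*g⁻¹*c*vn*α*s1^2 - (1/4)*g⁻¹*c^2*α^2*s3^2 - (1/4)*g⁻¹*c^2*α^2*s1^2) * hc2 +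
    (- (1/2)*h*α^2*s3*t3 - (1/2)*h*α^2*s1*t1 - (1/2)*g⁻¹*vte^2*t2^2 - (1/2)*g⁻¹*vne*vte^2 - (1/4)*g⁻¹*vne^2*t3^2 - (1/4)*g⁻¹*vne^2*t1^2 - (1/2)*g⁻¹*vne^3 - (1/2)*g⁻¹*cext*vne*α*t3^2 + (1/2)*g⁻¹*cext*vne*α*t1^2 - (1/4)*g⁻¹*cext^2*α^2*t3^2 - (1/4)*g⁻¹*cext^2*α^2*t1^2 - g⁻¹*cext^2*vne*α - (1/2)*g⁻¹*cext^2*vne*α^2 + (1/2)*g⁻¹*c*vn*α*s3*t3 - (1/2)*g⁻¹*c*vn*α*s1*t1 - (1/2)*g⁻¹*c*vn*n2^2*α*s3*t3 + (1/2)*g⁻¹*c*vn*n2^2*α*s1*t1 - (1/2)*g⁻¹*c*vn*n1^2*α*s3*t3 + (1/2)*g⁻¹*c*vn*n1^2*α*s1*t1 + (1/2)*g*g⁻¹*h*α^2*s3*t3 + (1/2)*g*g⁻¹*h*α^2*s1*t1) * hce2 + (- vτ*vte*n2^2*s2*t2 - vτ*vte*n1^2*s2*t2) * hB + (- (1/2)*h*vn*vτ^2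 - (1/2)*h*vn^3 - g⁻¹*c*cext*vτ*vte*s2*t2 - (1/2)*g⁻¹*c*cext*vn*vne*s3*t3 - (1/2)*g⁻¹*c*cext*vn*vne*s1*t1 - g*h^2*vn*α - (1/2)*g*g⁻¹*hext*c*vn*α*s3*t3 + (1/2)*g*g⁻¹*hext*c*vn*α*s1*t1) * hn + (- (1/2)*g*h*hext*s3*t3 - (1/2)*g*h*hext*s1*t1 - (1/4)*g*g⁻¹*hext*cext^2*t3^2 - (1/4)*g*g⁻¹*hext*cext^2*t1^2 - (1/2)*g*g⁻¹*hext*cext^2*vne - (1/4)*g*g⁻¹*h*c^2*s3^2 - (1/4)*g*g⁻¹*h*c^2*s1^2 + (1/2)*g^2*g⁻¹*h*hext*s3*t3 + (1/2)*g^2*g⁻¹*h*hext*s1*t1) * hα2 +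
    (- (1/4)*g*g⁻¹*h*vn^2 + (1/2)*g*g⁻¹*h*c*vn*α - (1/2)*g*g⁻¹*h*c^2 + (1/2)*g*g⁻¹*h*c^2*α) * hs1 + (- (1/4)*g*g⁻¹*hext*vne^2 + (1/2)*g*g⁻¹*hext*cext*vne*α - (1/2)*g*g⁻¹*hext*cext^2 + (1/2)*g*g⁻¹*hext*cext^2*α) * ht1 + (- (1/2)*g*g⁻¹*h*vτ^2) * hs2 + (- (1/2)*g*g⁻¹*hext*vte^2) * ht2 +
    (- (1/4)*g*g⁻¹*h*vn^2 - (1/2)*g*g⁻¹*h*c*vn*α - (1/2)*g*g⁻¹*h*c^2 + (1/2)*g*g⁻¹*h*c^2*α) * hs3 + (- (1/4)*g*g⁻¹*hext*vne^2 - (1/2)*g*g⁻¹*hext*cext*vne*α - (1/2)*g*g⁻¹*hext*cext^2 + (1/2)*g*g⁻¹*hext*cext^2*α) * ht3)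
end
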